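/- arXiv:1909.13270 — 5 statements merged into one kernel-verified Lean document; each statement's English description precedes it below -/
import Mathlib

section
/- Let B be an m×m real symmetric matrix with eigenvalues σ_1 ≥ ... ≥ σ_m, and let x_m be a unit eigenvector corresponding to the smallest eigenvalue σ_m. Then for every unit vector x in R^m, ⟨B, x xᵀ − x_m x_mᵀ⟩ ≥ ((σ_{m−1} − σ_m)/2) · ‖x xᵀ − x_m x_mᵀ‖_F², where ⟨·,·⟩ denotes the trace inner product of matrices and ‖·‖_F the Frobenius norm. -/
open scoped BigOperators
open Matrix

namespace SpherePoly

/-- for a real symmetric matrix `B` with eigenvalues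
`σ 0 ≥ σ 1 ≥ ... ≥ σ (m+1)` (realized by an orthonormal eigenbasis `u`), with
`x_m := u (Fin.last (m+1))` a unit eigenvector of the smallest eigenvalue, and for any
unit vector `x`, one has
`⟨B, x xᵀ − x_m x_mᵀ⟩ ≥ ((σ_{m−1} − σ_m)/2) ‖x xᵀ − x_m x_mᵀ‖_F²`. -/
theorem stmt1 (m : ℕ) (B : Matrix (Fin (m + 2)) (Fin (m + 2)) ℝ) (hB : B.IsSymm)
    (σ : Fin (m + 2) → ℝ) (u : Fin (m + 2) → (Fin (m + 2) → ℝ))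
    (hortho : ∀ i j, u i ⬝ᵥ u j = if i = j then (1 : ℝ) else 0)
    (heig : ∀ i, B *ᵥ u i = σ i • u i)
    (hdesc : ∀ i j : Fin (m + 2), i ≤ j → σ j ≤ σ i)
    (x : Fin (m + 2) → ℝ) (hx : x ⬝ᵥ x = 1) :
    ((σ (Fin.castSucc (Fin.last m)) - σ (Fin.last (m + 1))) / 2) *
        (∑ i, ∑ j,
          ((vecMulVec x x - vecMulVec (u (Fin.last (m + 1))) (u (Fin.last (m + 1)))) i j) ^ 2)
      ≤ ∑ i, ∑ j,
          B i j * (vecMulVec x x - vecMulVec (u (Fin.last (m + 1))) (u (Fin.last (m + 1)))) i j := by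
  set L : Fin (m + 2) := Fin.last (m + 1) with hLdef
  set P : Fin (m + 2) := Fin.castSucc (Fin.last m) with hPdef
  set U : Matrix (Fin (m + 2)) (Fin (m + 2)) ℝ := Matrix.of u with hUdef
  have hUUt : U * Uᵀ = 1 := by
    ext i j
    simpa [Matrix.mul_apply, Matrix.one_apply, dotProduct, hUdef] using hortho i j
  have hUtU : Uᵀ * U = 1 := mul_eq_one_comm.mp hUUt
  have hpres : ∀ v w : Fin (m + 2) → ℝ, (U *ᵥ v) ⬝ᵥ (U *ᵥ w) = v ⬝ᵥ w := by
    intro v w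
    calc (U *ᵥ v) ⬝ᵥ (U *ᵥ w) = ((U *ᵥ v) ᵥ* U) ⬝ᵥ w := Matrix.dotProduct_mulVec _ _ _
      _ = (Uᵀ *ᵥ (U *ᵥ v)) ⬝ᵥ w := by rw [Matrix.mulVec_transpose]
      _ = ((Uᵀ * U) *ᵥ v) ⬝ᵥ w := by rw [Matrix.mulVec_mulVec]
      _ = v ⬝ᵥ w := by rw [hUtU, Matrix.one_mulVec]
  set c : Fin (m + 2) → ℝ := U *ᵥ x with hcdef
  have hc : ∀ i, c i = u i ⬝ᵥ x := fun i => rfl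
  have hsum1 : ∑ i, c i ^ 2 = 1 := by
    have := hpres x x
    rw [hx, ← hcdef] at this
    simpa [dotProduct, sq] using this
  have hUBx : (U *ᵥ (B *ᵥ x)) = fun i => σ i * c i := by
    funext i
    have h1 : (U *ᵥ (B *ᵥ x)) i = u i ⬝ᵥ (B *ᵥ x) := rfl
    rw [h1, Matrix.dotProduct_mulVec, ← Matrix.mulVec_transpose, hB.eq, heig i]
    simp [smul_dotProduct, hc]
  have hxBx : x ⬝ᵥ (B *ᵥ x) = ∑ i, σ i * c i ^ 2 := by
    have := hpres x (B *ᵥ x)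
    rw [hUBx, ← hcdef] at this
    rw [← this]
    simp [dotProduct]
    exact Finset.sum_congr rfl fun i _ => by ring
  have hyBy : u L ⬝ᵥ (B *ᵥ u L) = σ L := by
    rw [heig L]
    simp [dotProduct_smul, hortho L L]
  -- RHS identification
  have hRHS : (∑ i, ∑ j, B i j * (vecMulVec x x - vecMulVec (u L) (u L)) i j)
      = x ⬝ᵥ (B *ᵥ x) - u L ⬝ᵥ (B *ᵥ u L) := by
    simp only [Matrix.sub_apply, Matrix.vecMulVec_apply, mul_sub, Finset.sum_sub_distrib,
      dotProduct, Matrix.mulVec]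
    congr 1 <;>
      exact Finset.sum_congr rfl fun i _ => by
        rw [Finset.mul_sum]
        exact Finset.sum_congr rfl fun j _ => by ring
  -- Frobenius norm expansion
  have expand : ∀ a b : Fin (m + 2) → ℝ,
      (∑ i, ∑ j, (a i * a j - b i * b j) ^ 2)
        = (∑ i, a i ^ 2) ^ 2 - 2 * (∑ i, a i * b i) ^ 2 + (∑ i, b i ^ 2) ^ 2 := by
    intro a b
    have step1 : (∑ i, ∑ j, (a i * a j - b i * b j) ^ 2)
        = ∑ i, ∑ j, (a i ^ 2 * a j ^ 2 - 2 * ((a i * b i) * (a j * b j)) + b i ^ 2 * b j ^ 2) :=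
      Finset.sum_congr rfl fun i _ => Finset.sum_congr rfl fun j _ => by ring
    rw [step1]
    simp only [Finset.sum_add_distrib, Finset.sum_sub_distrib, ← Finset.mul_sum,
      ← Finset.sum_mul]
    ring
  have ex2 : ∑ i, u L i ^ 2 = 1 := by
    have := hortho L L
    simpa [dotProduct, sq] using this
  have ex1 : ∑ i, x i ^ 2 = 1 := by simpa [dotProduct, sq] using hx
  have ex3 : ∑ i, x i * u L i = c L := by
    rw [hc L]
    simp [dotProduct, mul_comm]
  have hF : (∑ i, ∑ j, ((vecMulVec x x - vecMulVec (u L) (u L)) i j) ^ 2)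
      = 2 - 2 * c L ^ 2 := by
    have := expand x (u L)
    simp only [Matrix.sub_apply, Matrix.vecMulVec_apply]
    rw [this, ex1, ex2, ex3]
    ring
  -- key inequality
  have h1cL : 1 - c L ^ 2 = ∑ i, (if i = L then 0 else c i ^ 2) := by
    have e : ∀ i, (if i = L then (0:ℝ) else c i ^ 2)
        = c i ^ 2 - (if i = L then c i ^ 2 else 0) := by
      intro i; split <;> simp
    simp only [e, Finset.sum_sub_distrib, hsum1, Finset.sum_ite_eq' Finset.univ L
      (fun i => c i ^ 2), Finset.mem_univ, if_true]
  have hkey : (σ P - σ L) * (1 - c L ^ 2) ≤ (∑ i, σ i * c i ^ 2) - σ L := by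
    have hsl : (∑ i, σ i * c i ^ 2) - σ L = ∑ i, (σ i - σ L) * c i ^ 2 := by
      simp only [sub_mul, Finset.sum_sub_distrib, ← Finset.mul_sum, hsum1, mul_one]
    rw [hsl, h1cL, Finset.mul_sum]
    apply Finset.sum_le_sum
    intro i _
    split_ifs with h
    · subst h; simp
    · have hiP : i ≤ P := by
        have h1 : i.val < m + 2 := i.isLt
        have h2 : i.val ≠ m + 1 := fun hv => h (Fin.ext hv)
        have : i.val ≤ m := by omega
        simpa [Fin.le_def, hPdef] using this
      have := hdesc i P hiP
      nlinarith [sq_nonneg (c i)]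
  rw [hF, hRHS, hxBx, hyBy]
  nlinarith [hkey]

end SpherePoly
end

section
/- Let d ≥ 2 and let X ∈ S^{n^d} be a symmetric tensor such that its matricization Mat(X) ∈ R^{n^{⌊d/2⌋} × n^{⌈d/2⌉}} has rank one. Then X is a rank-one tensor, i.e., X = λ x^{∘d} for some scalar λ and unit vector x ∈ R^n. Conversely if X is a symmetric rank-one tensor then Mat(X) has rank one. Hence {X ∈ S^{n^d} : rank_CP(X) = 1} = {X ∈ S^{n^d} : rank(Mat(X)) = 1}. -/
open scoped BigOperators

namespace SpherePoly

def IsSymT {n d : ℕ} (A : (Fin d → Fin n) → ℝ) : Prop :=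
  ∀ (π : Equiv.Perm (Fin d)) (i : Fin d → Fin n), A (i ∘ π) = A i

/-- Balanced matricization: reshape a `d`-th order tensor into an
`n^{⌊d/2⌋} × n^{⌈d/2⌉}` matrix (rows indexed by the first `⌊d/2⌋` modes). -/
def matT {n d : ℕ} (X : (Fin d → Fin n) → ℝ) :
    Matrix (Fin (d / 2) → Fin n) (Fin (d - d / 2) → Fin n) ℝ :=
  fun a b => X fun i => Sum.elim a b (finSumFinEquiv.symm (Fin.cast (by omega) i))

private def rE (d : ℕ) : Fin d ≃ (Fin (d / 2) ⊕ Fin (d - d / 2)) :=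
  (finCongr (by omega)).trans finSumFinEquiv.symm

private theorem matT_app {n d : ℕ} (X : (Fin d → Fin n) → ℝ) (a b) :
    matT X a b = X (fun t => Sum.elim a b (rE d t)) := rfl

private theorem matT_sec {n d : ℕ} (X : (Fin d → Fin n) → ℝ) (i : Fin d → Fin n) :
    matT X (fun a => i ((rE d).symm (.inl a))) (fun b => i ((rE d).symm (.inr b))) = X i := by
  rw [matT_app]
  congr 1
  funext t
  rcases h : rE d t with a | b
  · have h2 : (rE d).symm (Sum.inl a) = t := by rw [← h]; exact (rE d).symm_apply_apply t
    simp [h2]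
  · have h2 : (rE d).symm (Sum.inr b) = t := by rw [← h]; exact (rE d).symm_apply_apply t
    simp [h2]

private def mixP {n d : ℕ} (P : Fin d → Bool) (i j : Fin d → Fin n) : Fin d → Fin n :=
  fun t => if P t then j t else i t

private theorem keyPi {n d : ℕ} {X : (Fin d → Fin n) → ℝ}
    {u : (Fin (d / 2) → Fin n) → ℝ} {w : (Fin (d - d / 2) → Fin n) → ℝ}
    (hX : IsSymT X) (hf : ∀ a b, matT X a b = u a * w b) (π : Equiv.Perm (Fin d))
    (i : Fin d → Fin n) :
    X i = u (fun a => i (π ((rE d).symm (.inl a)))) * w (fun b => i (π ((rE d).symm (.inr b)))) := by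
  rw [← hX π i, ← matT_sec X (i ∘ π), hf]
  rfl

private theorem exch_base {n d : ℕ} {X : (Fin d → Fin n) → ℝ}
    {u : (Fin (d / 2) → Fin n) → ℝ} {w : (Fin (d - d / 2) → Fin n) → ℝ}
    (hX : IsSymT X) (hf : ∀ a b, matT X a b = u a * w b) (π : Equiv.Perm (Fin d))
    (i j : Fin d → Fin n) :
    X i * X j = X (mixP (fun t => (rE d (π.symm t)).isLeft) i j)
        * X (mixP (fun t => (rE d (π.symm t)).isLeft) j i) := by
  rw [keyPi hX hf π i, keyPi hX hf π j, keyPi hX hf π (mixP _ i j), keyPi hX hf π (mixP _ j i)]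
  have h1 : ∀ (i j : Fin d → Fin n) a,
      mixP (fun t => (rE d (π.symm t)).isLeft) i j (π ((rE d).symm (.inl a)))
        = j (π ((rE d).symm (.inl a))) := by
    intro i j a; simp [mixP]
  have h2 : ∀ (i j : Fin d → Fin n) b,
      mixP (fun t => (rE d (π.symm t)).isLeft) i j (π ((rE d).symm (.inr b)))
        = i (π ((rE d).symm (.inr b))) := by
    intro i j b; simp [mixP]
  simp only [h1, h2]
  ring

private theorem mixP_mixP {n d : ℕ} (P Q : Fin d → Bool) (i j : Fin d → Fin n) :
    mixP Q (mixP P i j) (mixP P j i) = mixP (fun t => xor (P t) (Q t)) i j := by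
  funext t
  by_cases hP : P t <;> by_cases hQ : Q t <;> simp [mixP, hP, hQ]

private theorem exch_comp {n d : ℕ} {X : (Fin d → Fin n) → ℝ} {P Q : Fin d → Bool}
    (hP : ∀ i j, X i * X j = X (mixP P i j) * X (mixP P j i))
    (hQ : ∀ i j, X i * X j = X (mixP Q i j) * X (mixP Q j i)) (i j : Fin d → Fin n) :
    X i * X j = X (mixP (fun t => xor (P t) (Q t)) i j)
      * X (mixP (fun t => xor (P t) (Q t)) j i) := by
  rw [hP i j, hQ (mixP P i j) (mixP P j i), mixP_mixP, mixP_mixP]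

private theorem exch_pair {n d : ℕ} {X : (Fin d → Fin n) → ℝ}
    {u : (Fin (d / 2) → Fin n) → ℝ} {w : (Fin (d - d / 2) → Fin n) → ℝ}
    (hd : 2 ≤ d) (hX : IsSymT X) (hf : ∀ a b, matT X a b = u a * w b)
    (s t : Fin d) (hst : s ≠ t) (i j : Fin d → Fin n) :
    X i * X j = X (mixP (fun r => r == s || r == t) i j)
      * X (mixP (fun r => r == s || r == t) j i) := by
  have hp : 0 < d / 2 := by omega
  have hq : 0 < d - d / 2 := by omega
  set s₀ : Fin d := (rE d).symm (.inl ⟨0, hp⟩) with hs₀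
  set t₀ : Fin d := (rE d).symm (.inr ⟨0, hq⟩) with ht₀
  have hs₀t₀ : s₀ ≠ t₀ := by
    intro h
    exact absurd ((rE d).symm.injective h) (by simp)
  set σ : Equiv.Perm (Fin d) := Equiv.swap s₀ s with hσ
  have hσs₀ : σ s₀ = s := Equiv.swap_apply_left _ _
  have hσt₀ : σ t₀ ≠ s := by
    intro h
    exact hs₀t₀ (σ.injective (by rw [h, hσs₀]))
  set π₁ : Equiv.Perm (Fin d) := σ.trans (Equiv.swap (σ t₀) t) with hπ₁
  have hπ₁s : π₁ s₀ = s := by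
    show Equiv.swap (σ t₀) t (σ s₀) = s
    rw [hσs₀]
    exact Equiv.swap_apply_of_ne_of_ne (Ne.symm hσt₀) hst
  have hπ₁t : π₁ t₀ = t := by
    show Equiv.swap (σ t₀) t (σ t₀) = t
    exact Equiv.swap_apply_left _ _
  set π₂ : Equiv.Perm (Fin d) := (Equiv.swap s₀ t₀).trans π₁ with hπ₂
  have hπ₂symm : ∀ r, π₂.symm r = Equiv.swap s₀ t₀ (π₁.symm r) := fun r => rfl
  have h12 := exch_comp (exch_base hX hf π₁) (exch_base hX hf π₂) i j
  have hpred : (fun r => xor ((rE d) (π₁.symm r)).isLeft ((rE d) (π₂.symm r)).isLeft)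
      = (fun r : Fin d => r == s || r == t) := by
    funext r
    by_cases h1 : r = s
    · subst h1
      have e1 : π₁.symm r = s₀ := by rw [← hπ₁s, Equiv.symm_apply_apply]
      rw [hπ₂symm, e1, Equiv.swap_apply_left]
      simp [hs₀, ht₀]
    · by_cases h2 : r = t
      · subst h2
        have e1 : π₁.symm r = t₀ := by rw [← hπ₁t, Equiv.symm_apply_apply]
        rw [hπ₂symm, e1, Equiv.swap_apply_right]
        simp [hs₀, ht₀, h1]
      · have e1 : π₁.symm r ≠ s₀ := by
          intro h; exact h1 (by rw [← hπ₁s, ← h, Equiv.apply_symm_apply])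
        have e2 : π₁.symm r ≠ t₀ := by
          intro h; exact h2 (by rw [← hπ₁t, ← h, Equiv.apply_symm_apply])
        rw [hπ₂symm, Equiv.swap_apply_of_ne_of_ne e1 e2]
        simp [h1, h2]
  rw [hpred] at h12
  exact h12


private theorem exch_one {n d : ℕ} {X : (Fin d → Fin n) → ℝ}
    {u : (Fin (d / 2) → Fin n) → ℝ} {w : (Fin (d - d / 2) → Fin n) → ℝ}
    (hd : 2 ≤ d) (hX : IsSymT X) (hf : ∀ a b, matT X a b = u a * w b)
    (t : Fin d) (i j : Fin d → Fin n)
    (hsh : d = 2 ∨ ∃ s, s ≠ t ∧ i s = j s) :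
    X i * X j = X (mixP (fun r => r == t) i j) * X (mixP (fun r => r == t) j i) := by
  rcases hsh with hd2 | ⟨s, hst, hsh⟩
  · subst hd2
    set t₀ : Fin 2 := (rE 2).symm (.inr ⟨0, by omega⟩) with ht₀
    set π : Equiv.Perm (Fin 2) := Equiv.swap t₀ t with hπdef
    have hπsymm : ∀ r, π.symm r = Equiv.swap t₀ t r := by
      intro r; rw [hπdef, Equiv.symm_swap]
    have hiff : ∀ x : Fin 2, ((rE 2) x).isLeft = false ↔ x = t₀ := by
      intro x
      constructor
      · intro hx
        rcases hrx : (rE 2) x with a | b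
        · rw [hrx] at hx; simp at hx
        · have hb : b = ⟨0, by omega⟩ := by
            apply Fin.ext
            have := b.isLt
            omega
          have h3 := congrArg (rE 2).symm hrx
          rw [Equiv.symm_apply_apply] at h3
          rw [h3, hb]
      · intro hx; subst hx; rw [ht₀]; simp
    have hP : ∀ r : Fin 2, ((rE 2) (π.symm r)).isLeft = !(r == t) := by
      intro r
      rw [hπsymm]
      by_cases hr : r = t
      · subst hr
        rw [Equiv.swap_apply_right]
        simp [(hiff t₀).mpr rfl]
      · have hne : Equiv.swap t₀ t r ≠ t₀ := by
          intro h
          exact hr (by simpa using congrArg (Equiv.swap t₀ t) h)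
        have hL : ((rE 2) (Equiv.swap t₀ t r)).isLeft = true := by
          by_contra hcon
          rw [Bool.not_eq_true] at hcon
          exact hne ((hiff _).mp hcon)
        simp [hL, hr]
    have h := exch_base hX hf π j i
    have e1 : mixP (fun r => ((rE 2) (π.symm r)).isLeft) j i
        = mixP (fun r : Fin 2 => r == t) i j := by
      funext r
      simp only [mixP, hP r]
      by_cases hr : r = t <;> simp [hr]
    have e2 : mixP (fun r => ((rE 2) (π.symm r)).isLeft) i j
        = mixP (fun r : Fin 2 => r == t) j i := by
      funext r
      simp only [mixP, hP r]
      by_cases hr : r = t <;> simp [hr]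
    rw [e1, e2] at h
    rw [mul_comm (X i) (X j)]
    exact h
  · have h := exch_pair hd hX hf s t hst i j
    have e1 : mixP (fun r => r == s || r == t) i j = mixP (fun r => r == t) i j := by
      funext r
      by_cases h1 : r = s
      · subst h1
        have h2 : (r == t) = false := by simp [hst]
        simp [mixP, h2, hsh]
      · simp [mixP, h1]
    have e2 : mixP (fun r => r == s || r == t) j i = mixP (fun r => r == t) j i := by
      funext r
      by_cases h1 : r = s
      · subst h1
        have h2 : (r == t) = false := by simp [hst]
        simp [mixP, h2, hsh]
      · simp [mixP, h1]
    rw [e1, e2] at h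
    exact h


private theorem rank_zero_eq {n d : ℕ}
    (A : Matrix (Fin (d / 2) → Fin n) (Fin (d - d / 2) → Fin n) ℝ) (h : A.rank = 0) :
    A = 0 := by
  classical
  rw [Matrix.rank] at h
  have hrange : LinearMap.range A.mulVecLin = ⊥ := Submodule.finrank_eq_zero.mp h
  rw [LinearMap.range_eq_bot] at hrange
  ext a b
  have h2 : A.mulVecLin (Pi.single b 1) = 0 := by rw [hrange]; rfl
  have h3 := congrArg (fun v => v a) h2
  simpa [Matrix.mulVecLin_apply] using h3

private theorem rank_one_fac {n d : ℕ}
    (A : Matrix (Fin (d / 2) → Fin n) (Fin (d - d / 2) → Fin n) ℝ) (h : A.rank = 1) :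
    ∃ (u : (Fin (d / 2) → Fin n) → ℝ) (w : (Fin (d - d / 2) → Fin n) → ℝ),
      ∀ a b, A a b = u a * w b := by
  classical
  rw [Matrix.rank] at h
  obtain ⟨u0, hu0, hspan⟩ := finrank_eq_one_iff'.mp h
  have hw : ∀ b, ∃ cb : ℝ, ∀ a, A a b = u0.val a * cb := by
    intro b
    obtain ⟨cb, hcb⟩ := hspan ⟨A.mulVecLin (Pi.single b 1), LinearMap.mem_range_self _ _⟩
    refine ⟨cb, fun a => ?_⟩
    have h3 := congrArg (fun q : ↥(LinearMap.range A.mulVecLin) => q.val a) hcb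
    simp only [Submodule.coe_smul, Pi.smul_apply, smul_eq_mul] at h3
    rw [mul_comm]
    simpa [Matrix.mulVecLin_apply] using h3.symm
  choose w hwspec using hw
  exact ⟨u0.val, w, fun a b => hwspec b a⟩

private theorem part2 {n d : ℕ} (hd : 2 ≤ d) (X : (Fin d → Fin n) → ℝ) (hne : X ≠ 0)
    (v : Fin d → Fin n → ℝ) (hv : X = fun i => ∏ j, v j (i j)) : (matT X).rank = 1 := by
  classical
  have hM : matT X = Matrix.vecMulVec
      (fun a : Fin (d / 2) → Fin n => ∏ a', v ((rE d).symm (.inl a')) (a a'))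
      (fun b : Fin (d - d / 2) → Fin n => ∏ b', v ((rE d).symm (.inr b')) (b b')) := by
    ext a b
    rw [matT_app, hv]
    show (∏ t, v t (Sum.elim a b (rE d t))) = _
    rw [← Equiv.prod_comp (rE d).symm (fun t => v t (Sum.elim a b (rE d t)))]
    rw [Fintype.prod_sum_type]
    simp [Matrix.vecMulVec]
  have h1 : (matT X).rank ≤ 1 := by
    rw [hM, Matrix.vecMulVec_eq (Fin 1)]
    refine le_trans (Matrix.rank_mul_le_left _ _) ?_
    refine le_trans (Matrix.rank_le_card_width _) ?_
    simp
  have h0 : (matT X).rank ≠ 0 := by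
    intro h00
    have hA0 := rank_zero_eq _ h00
    obtain ⟨i0, hi0⟩ := Function.ne_iff.mp hne
    apply hi0
    rw [← matT_sec X i0, hA0]
    rfl
  omega

private theorem part1 {n d : ℕ} (hd : 2 ≤ d) (X : (Fin d → Fin n) → ℝ) (hX : IsSymT X)
    (hr : (matT X).rank = 1) :
    ∃ (lam : ℝ) (x : Fin n → ℝ), (∑ j, x j ^ 2 = 1) ∧
      X = fun i => lam * ∏ j, x (i j) := by
  classical
  obtain ⟨u, w, hf⟩ := rank_one_fac (matT X) hr
  have hMne : matT X ≠ 0 := by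
    intro h0
    rw [h0] at hr
    simp at hr
  obtain ⟨as, has⟩ := Function.ne_iff.mp hMne
  obtain ⟨bs, hab⟩ := Function.ne_iff.mp has
  set iS : Fin d → Fin n := fun t => Sum.elim as bs (rE d t) with hiSdef
  have hc : X iS ≠ 0 := fun h => hab (by rw [matT_app]; exact h)
  obtain ⟨z0, hz0v⟩ : ∃ z0 : Fin d, (z0 : ℕ) = 0 := ⟨⟨0, by omega⟩, rfl⟩
  obtain ⟨z1, hz1v⟩ : ∃ z1 : Fin d, (z1 : ℕ) = 1 := ⟨⟨1, by omega⟩, rfl⟩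
  have hz01 : z0 ≠ z1 := by
    intro h
    have := congrArg Fin.val h
    omega
  -- (F1)
  have hF1 : ∀ k l, X (Function.update (Function.update iS z0 k) z1 l) * X iS
      = X (Function.update iS z0 k) * X (Function.update iS z1 l) := by
    intro k l
    have hx := exch_one hd hX hf z1 (Function.update (Function.update iS z0 k) z1 l) iS ?hshare
    case hshare =>
      by_cases hd2 : d = 2
      · exact Or.inl hd2
      · refine Or.inr ⟨⟨2, by omega⟩, ?_, ?_⟩
        · intro h
          have := congrArg Fin.val h
          simp at this
          omega
        · rw [Function.update_of_ne (by intro h; have := congrArg Fin.val h; simp at this; omega)]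
          rw [Function.update_of_ne (by intro h; have := congrArg Fin.val h; simp at this; omega)]
    have e1 : mixP (fun r => r == z1) (Function.update (Function.update iS z0 k) z1 l) iS
        = Function.update iS z0 k := by
      funext r
      simp only [mixP, beq_iff_eq]
      by_cases hr : r = z1
      · subst hr
        rw [if_pos rfl, Function.update_of_ne hz01.symm]
      · rw [if_neg hr, Function.update_of_ne hr]
    have e2 : mixP (fun r => r == z1) iS (Function.update (Function.update iS z0 k) z1 l)
        = Function.update iS z1 l := by
      funext r
      simp only [mixP, beq_iff_eq]
      by_cases hr : r = z1
      · subst hr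
        rw [if_pos rfl, Function.update_self, Function.update_self]
      · rw [if_neg hr, Function.update_of_ne hr]
    rw [e1, e2] at hx
    exact hx
  -- (F2)
  have hYsym : ∀ k l, X (Function.update (Function.update iS z0 k) z1 l)
      = X (Function.update (Function.update iS z0 l) z1 k) := by
    intro k l
    have hcomp : (Function.update (Function.update iS z0 k) z1 l) ∘ (Equiv.swap z0 z1)
        = Function.update (Function.update iS z0 l) z1 k := by
      funext r
      simp only [Function.comp_apply]
      by_cases h0 : r = z0
      · rw [h0, Equiv.swap_apply_left]
        simp [Function.update_apply, hz01, hz01.symm]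
      · by_cases h1 : r = z1
        · rw [h1, Equiv.swap_apply_right]
          simp [Function.update_apply, hz01, hz01.symm]
        · rw [Equiv.swap_apply_of_ne_of_ne h0 h1]
          simp [Function.update_apply, h0, h1]
    rw [← hX (Equiv.swap z0 z1) (Function.update (Function.update iS z0 k) z1 l), hcomp]
  -- (beta)
  have hbeta : ∀ l, X (Function.update iS z1 l) * X iS
      = X (Function.update iS z0 l) * X (Function.update iS z1 (iS z0)) := by
    intro l
    have h1 := hF1 (iS z0) l
    have h2 := hF1 l (iS z0)
    rw [hYsym (iS z0) l] at h1
    have h3 := h1.symm.trans h2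
    rw [Function.update_eq_self] at h3
    rw [mul_comm]
    exact h3
  -- (F3)
  have hF3 : ∀ t : Fin d, 2 ≤ (t : ℕ) → ∀ k, X (Function.update iS t k) * X iS
      = X (Function.update iS t (iS z0)) * X (Function.update iS z0 k) := by
    intro t ht k
    have ht0 : t ≠ z0 := by intro h; have := congrArg Fin.val h; omega
    have ht1 : t ≠ z1 := by intro h; have := congrArg Fin.val h; omega
    have key : ∀ k k', X (Function.update iS t k) * X (Function.update iS z0 k')
        = X iS * X (Function.update (Function.update iS z0 k') t k) := by
      intro k k'
      have hx := exch_one hd hX hf t (Function.update iS t k) (Function.update iS z0 k')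
        (Or.inr ⟨z1, ht1.symm, by
          rw [Function.update_of_ne ht1.symm, Function.update_of_ne hz01.symm]⟩)
      have e1 : mixP (fun r => r == t) (Function.update iS t k) (Function.update iS z0 k')
          = iS := by
        funext r
        simp only [mixP, beq_iff_eq]
        by_cases hr : r = t
        · subst hr
          rw [if_pos rfl, Function.update_of_ne ht0]
        · rw [if_neg hr, Function.update_of_ne hr]
      have e2 : mixP (fun r => r == t) (Function.update iS z0 k') (Function.update iS t k)
          = Function.update (Function.update iS z0 k') t k := by
        funext r
        simp only [mixP, beq_iff_eq]
        by_cases hr : r = t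
        · subst hr
          rw [if_pos rfl, Function.update_self, Function.update_self]
        · rw [if_neg hr, Function.update_of_ne hr]
      rw [e1, e2] at hx
      exact hx
    have hswapD : ∀ k k', X (Function.update (Function.update iS z0 k') t k)
        = X (Function.update (Function.update iS z0 k) t k') := by
      intro k k'
      have hcomp : (Function.update (Function.update iS z0 k') t k) ∘ (Equiv.swap z0 t)
          = Function.update (Function.update iS z0 k) t k' := by
        funext r
        simp only [Function.comp_apply]
        by_cases h0 : r = z0
        · rw [h0, Equiv.swap_apply_left]
          simp [Function.update_apply, ht0, ht0.symm]
        · by_cases h1 : r = t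
          · rw [h1, Equiv.swap_apply_right]
            simp [Function.update_apply, ht0, ht0.symm]
          · rw [Equiv.swap_apply_of_ne_of_ne h0 h1]
            simp [Function.update_apply, h0, h1]
      rw [← hX (Equiv.swap z0 t) (Function.update (Function.update iS z0 k') t k), hcomp]
    have hgen : ∀ k k', X (Function.update iS t k) * X (Function.update iS z0 k')
        = X (Function.update iS t k') * X (Function.update iS z0 k) := by
      intro k k'
      have a1 := key k k'
      rw [hswapD k k'] at a1
      have a2 := key k' k
      exact a1.trans a2.symm
    have h3 := hgen k (iS z0)
    rw [Function.update_eq_self] at h3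
    exact h3
  -- telescoping
  set sig : ℕ → (Fin d → Fin n) → (Fin d → Fin n) :=
    fun m i t => if (t : ℕ) < m then iS t else i t with hsigdef
  have hstep : ∀ (m : ℕ), 1 ≤ m → ∀ (hm : m < d), ∀ i : Fin d → Fin n,
      X (sig m i) * X iS = X (sig (m+1) i)
        * X (Function.update iS ⟨m, hm⟩ (i ⟨m, hm⟩)) := by
    intro m h1 hm i
    have hmz0 : z0 ≠ (⟨m, hm⟩ : Fin d) := by
      intro h; have := congrArg Fin.val h; simp at this; omega
    have hx := exch_one hd hX hf ⟨m, hm⟩ (sig m i) iS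
      (Or.inr ⟨z0, hmz0, by simp only [hsigdef]; rw [if_pos (by omega)]⟩)
    have e1 : mixP (fun r => r == (⟨m, hm⟩ : Fin d)) (sig m i) iS = sig (m+1) i := by
      funext r
      simp only [mixP, beq_iff_eq, hsigdef]
      by_cases hr : r = (⟨m, hm⟩ : Fin d)
      · rw [hr, if_pos rfl, if_pos (by simp)]
      · rw [if_neg hr]
        have hrm : (r : ℕ) ≠ m := fun h => hr (Fin.ext (by simpa using h))
        by_cases h2 : (r : ℕ) < m
        · rw [if_pos h2, if_pos (by omega)]
        · rw [if_neg h2, if_neg (by omega)]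
    have e2 : mixP (fun r => r == (⟨m, hm⟩ : Fin d)) iS (sig m i)
        = Function.update iS ⟨m, hm⟩ (i ⟨m, hm⟩) := by
      funext r
      simp only [mixP, beq_iff_eq, hsigdef]
      by_cases hr : r = (⟨m, hm⟩ : Fin d)
      · rw [hr, if_pos rfl, if_neg (by simp), Function.update_self]
      · rw [if_neg hr, Function.update_of_ne hr]
    rw [e1, e2] at hx
    exact hx
  have htele : ∀ (jj : ℕ), jj ≤ d - 1 → ∀ i : Fin d → Fin n,
      X (sig (d - jj) i) * (X iS) ^ jj
        = X iS * ∏ t ∈ Finset.univ.filter (fun t : Fin d => d - jj ≤ (t : ℕ)),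
            X (Function.update iS t (i t)) := by
    intro jj
    induction jj with
    | zero =>
      intro _ i
      have hs : sig (d - 0) i = iS := by
        funext t
        simp only [hsigdef]
        rw [if_pos (by have := t.2; omega)]
      have hfil : Finset.univ.filter (fun t : Fin d => d - 0 ≤ (t : ℕ))
          = (∅ : Finset (Fin d)) := by
        ext t
        simp only [Finset.mem_filter, Finset.mem_univ, true_and, Finset.notMem_empty,
          iff_false]
        have := t.2; omega
      rw [hs, hfil]
      simp
    | succ jj ih =>
      intro hjj i
      have hm1 : 1 ≤ d - (jj+1) := by omega
      have hm2 : d - (jj+1) < d := by omega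
      have hms : d - (jj+1) + 1 = d - jj := by omega
      have hstep' := hstep (d - (jj+1)) hm1 hm2 i
      rw [hms] at hstep'
      have hins : Finset.univ.filter (fun t : Fin d => d - (jj+1) ≤ (t : ℕ))
          = insert (⟨d - (jj+1), hm2⟩ : Fin d)
              (Finset.univ.filter (fun t : Fin d => d - jj ≤ (t : ℕ))) := by
        ext t
        simp only [Finset.mem_filter, Finset.mem_univ, true_and, Finset.mem_insert,
          Fin.ext_iff]
        omega
      rw [hins, Finset.prod_insert (by
        simp only [Finset.mem_filter, Finset.mem_univ, true_and]
        omega)]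
      calc X (sig (d - (jj+1)) i) * X iS ^ (jj+1)
          = (X (sig (d - (jj+1)) i) * X iS) * X iS ^ jj := by ring
        _ = (X (sig (d - jj) i)
              * X (Function.update iS ⟨d - (jj+1), hm2⟩ (i ⟨d - (jj+1), hm2⟩))) * X iS ^ jj := by
            rw [hstep']
        _ = (X (sig (d - jj) i) * X iS ^ jj)
              * X (Function.update iS ⟨d - (jj+1), hm2⟩ (i ⟨d - (jj+1), hm2⟩)) := by ring
        _ = (X iS * ∏ t ∈ Finset.univ.filter (fun t : Fin d => d - jj ≤ (t : ℕ)),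
              X (Function.update iS t (i t)))
              * X (Function.update iS ⟨d - (jj+1), hm2⟩ (i ⟨d - (jj+1), hm2⟩)) := by
            rw [ih (by omega) i]
        _ = X iS * (X (Function.update iS ⟨d - (jj+1), hm2⟩ (i ⟨d - (jj+1), hm2⟩))
              * ∏ t ∈ Finset.univ.filter (fun t : Fin d => d - jj ≤ (t : ℕ)),
                X (Function.update iS t (i t))) := by ring
  have hfirst : ∀ i : Fin d → Fin n, X i * X iS = X (sig 2 i)
      * X (Function.update (Function.update iS z0 (i z0)) z1 (i z1)) := by
    intro i
    have hx := exch_pair hd hX hf z0 z1 hz01 i iS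
    have e1 : mixP (fun r => r == z0 || r == z1) i iS = sig 2 i := by
      funext r
      simp only [mixP, Bool.or_eq_true, beq_iff_eq, hsigdef]
      by_cases hr : r = z0 ∨ r = z1
      · rw [if_pos hr, if_pos (by rcases hr with h | h <;> (have := congrArg Fin.val h; omega))]
      · rw [if_neg hr, if_neg (by
          intro hlt
          apply hr
          have h2 : (r : ℕ) = 0 ∨ (r : ℕ) = 1 := by omega
          rcases h2 with h2 | h2
          · exact Or.inl (Fin.ext (by omega))
          · exact Or.inr (Fin.ext (by omega)))]
    have e2 : mixP (fun r => r == z0 || r == z1) iS i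
        = Function.update (Function.update iS z0 (i z0)) z1 (i z1) := by
      funext r
      simp only [mixP, Bool.or_eq_true, beq_iff_eq]
      by_cases h0 : r = z0
      · rw [if_pos (Or.inl h0), h0, Function.update_of_ne hz01, Function.update_self]
      · by_cases h1 : r = z1
        · rw [if_pos (Or.inr h1), h1, Function.update_self]
        · rw [if_neg (by tauto), Function.update_of_ne h1, Function.update_of_ne h0]
    rw [e1, e2] at hx
    exact hx
  have hmain : ∀ i : Fin d → Fin n, X i * X iS ^ (d-1)
      = X iS * X (Function.update (Function.update iS z0 (i z0)) z1 (i z1))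
        * ∏ t ∈ Finset.univ.filter (fun t : Fin d => 2 ≤ (t : ℕ)),
            X (Function.update iS t (i t)) := by
    intro i
    have h2 := htele (d-2) (by omega) i
    have hdd : d - (d-2) = 2 := by omega
    rw [hdd] at h2
    have hpow : X iS ^ (d-1) = X iS ^ (d-2) * X iS := by
      rw [← pow_succ]
      congr 1
      omega
    calc X i * X iS ^ (d-1) = (X i * X iS) * X iS ^ (d-2) := by rw [hpow]; ring
      _ = (X (sig 2 i)
            * X (Function.update (Function.update iS z0 (i z0)) z1 (i z1))) * X iS ^ (d-2) := by
          rw [hfirst i]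
      _ = (X (sig 2 i) * X iS ^ (d-2))
            * X (Function.update (Function.update iS z0 (i z0)) z1 (i z1)) := by ring
      _ = (X iS * ∏ t ∈ Finset.univ.filter (fun t : Fin d => 2 ≤ (t : ℕ)),
            X (Function.update iS t (i t)))
            * X (Function.update (Function.update iS z0 (i z0)) z1 (i z1)) := by rw [h2]
      _ = X iS * X (Function.update (Function.update iS z0 (i z0)) z1 (i z1))
            * ∏ t ∈ Finset.univ.filter (fun t : Fin d => 2 ≤ (t : ℕ)),
                X (Function.update iS t (i t)) := by ring
  -- splitting the full product
  have hsplit : ∀ g : Fin d → ℝ, (∏ t, g t)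
      = g z0 * g z1 * ∏ t ∈ Finset.univ.filter (fun t : Fin d => 2 ≤ (t : ℕ)), g t := by
    intro g
    have h01 : Finset.univ.filter (fun t : Fin d => ¬ 2 ≤ (t : ℕ))
        = ({z0, z1} : Finset (Fin d)) := by
      ext t
      simp only [Finset.mem_filter, Finset.mem_univ, true_and, Finset.mem_insert,
        Finset.mem_singleton, Fin.ext_iff]
      omega
    rw [← Finset.prod_filter_mul_prod_filter_not Finset.univ (fun t : Fin d => 2 ≤ (t : ℕ)) g,
      h01, Finset.prod_pair hz01]
    ring
  have hcard : (Finset.univ.filter (fun t : Fin d => 2 ≤ (t : ℕ))).card = d - 2 := by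
    have hcompl : Finset.univ.filter (fun t : Fin d => 2 ≤ (t : ℕ))
        = Finset.univ \ ({z0, z1} : Finset (Fin d)) := by
      ext t
      simp only [Finset.mem_filter, Finset.mem_univ, true_and, Finset.mem_sdiff,
        Finset.mem_insert, Finset.mem_singleton, Fin.ext_iff]
      omega
    rw [hcompl, Finset.card_sdiff_of_subset (Finset.subset_univ _), Finset.card_univ, Fintype.card_fin]
    have : ({z0, z1} : Finset (Fin d)).card = 2 := by
      rw [Finset.card_insert_of_notMem (by simp [hz01]), Finset.card_singleton]
    rw [this]
  have hYc : ∀ i : Fin d → Fin n,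
      X (Function.update (Function.update iS z0 (i z0)) z1 (i z1)) * (X iS * X iS)
      = X (Function.update iS z0 (i z0)) * (X (Function.update iS z0 (i z1))
          * X (Function.update iS z1 (iS z0))) := by
    intro i
    calc X (Function.update (Function.update iS z0 (i z0)) z1 (i z1)) * (X iS * X iS)
        = (X (Function.update (Function.update iS z0 (i z0)) z1 (i z1)) * X iS) * X iS := by
          ring
      _ = (X (Function.update iS z0 (i z0)) * X (Function.update iS z1 (i z1))) * X iS := by
          rw [hF1 (i z0) (i z1)]
      _ = X (Function.update iS z0 (i z0)) * (X (Function.update iS z1 (i z1)) * X iS) := by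
          ring
      _ = X (Function.update iS z0 (i z0)) * (X (Function.update iS z0 (i z1))
            * X (Function.update iS z1 (iS z0))) := by rw [hbeta (i z1)]
  have hPc : ∀ i : Fin d → Fin n,
      (∏ t ∈ Finset.univ.filter (fun t : Fin d => 2 ≤ (t : ℕ)),
        X (Function.update iS t (i t))) * X iS ^ (d-2)
      = (∏ t ∈ Finset.univ.filter (fun t : Fin d => 2 ≤ (t : ℕ)),
          X (Function.update iS t (iS z0)))
        * ∏ t ∈ Finset.univ.filter (fun t : Fin d => 2 ≤ (t : ℕ)),
            X (Function.update iS z0 (i t)) := by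
    intro i
    calc (∏ t ∈ Finset.univ.filter (fun t : Fin d => 2 ≤ (t : ℕ)),
          X (Function.update iS t (i t))) * X iS ^ (d-2)
        = (∏ t ∈ Finset.univ.filter (fun t : Fin d => 2 ≤ (t : ℕ)),
            X (Function.update iS t (i t)))
          * ∏ _t ∈ Finset.univ.filter (fun t : Fin d => 2 ≤ (t : ℕ)), X iS := by
          rw [Finset.prod_const, hcard]
      _ = ∏ t ∈ Finset.univ.filter (fun t : Fin d => 2 ≤ (t : ℕ)),
            (X (Function.update iS t (i t)) * X iS) := by
          rw [← Finset.prod_mul_distrib]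
      _ = ∏ t ∈ Finset.univ.filter (fun t : Fin d => 2 ≤ (t : ℕ)),
            (X (Function.update iS t (iS z0)) * X (Function.update iS z0 (i t))) := by
          refine Finset.prod_congr rfl (fun t htm => ?_)
          exact hF3 t (Finset.mem_filter.mp htm).2 (i t)
      _ = (∏ t ∈ Finset.univ.filter (fun t : Fin d => 2 ≤ (t : ℕ)),
            X (Function.update iS t (iS z0)))
          * ∏ t ∈ Finset.univ.filter (fun t : Fin d => 2 ≤ (t : ℕ)),
              X (Function.update iS z0 (i t)) := Finset.prod_mul_distrib
  have hfinal : ∀ i : Fin d → Fin n,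
      X i * (X iS ^ (d-1) * (X iS * X iS) * X iS ^ (d-2))
      = (X iS * X (Function.update iS z1 (iS z0))
          * ∏ t ∈ Finset.univ.filter (fun t : Fin d => 2 ≤ (t : ℕ)),
              X (Function.update iS t (iS z0)))
        * ∏ t, X (Function.update iS z0 (i t)) := by
    intro i
    have hzsplit := hsplit (fun t => X (Function.update iS z0 (i t)))
    calc X i * (X iS ^ (d-1) * (X iS * X iS) * X iS ^ (d-2))
        = (X i * X iS ^ (d-1)) * (X iS * X iS) * X iS ^ (d-2) := by ring
      _ = (X iS * X (Function.update (Function.update iS z0 (i z0)) z1 (i z1))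
            * ∏ t ∈ Finset.univ.filter (fun t : Fin d => 2 ≤ (t : ℕ)),
                X (Function.update iS t (i t))) * (X iS * X iS) * X iS ^ (d-2) := by
          rw [hmain i]
      _ = X iS * (X (Function.update (Function.update iS z0 (i z0)) z1 (i z1))
            * (X iS * X iS))
            * ((∏ t ∈ Finset.univ.filter (fun t : Fin d => 2 ≤ (t : ℕ)),
                X (Function.update iS t (i t))) * X iS ^ (d-2)) := by ring
      _ = X iS * (X (Function.update iS z0 (i z0)) * (X (Function.update iS z0 (i z1))
            * X (Function.update iS z1 (iS z0))))
            * ((∏ t ∈ Finset.univ.filter (fun t : Fin d => 2 ≤ (t : ℕ)),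
                X (Function.update iS t (iS z0)))
              * ∏ t ∈ Finset.univ.filter (fun t : Fin d => 2 ≤ (t : ℕ)),
                  X (Function.update iS z0 (i t))) := by
          rw [hYc i, hPc i]
      _ = (X iS * X (Function.update iS z1 (iS z0))
            * ∏ t ∈ Finset.univ.filter (fun t : Fin d => 2 ≤ (t : ℕ)),
                X (Function.update iS t (iS z0)))
          * (X (Function.update iS z0 (i z0)) * X (Function.update iS z0 (i z1))
            * ∏ t ∈ Finset.univ.filter (fun t : Fin d => 2 ≤ (t : ℕ)),
                X (Function.update iS z0 (i t))) := by ring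
      _ = (X iS * X (Function.update iS z1 (iS z0))
            * ∏ t ∈ Finset.univ.filter (fun t : Fin d => 2 ≤ (t : ℕ)),
                X (Function.update iS t (iS z0)))
          * ∏ t, X (Function.update iS z0 (i t)) := by rw [← hzsplit]
  -- solve for X
  have hCne : X iS ^ (d-1) * (X iS * X iS) * X iS ^ (d-2) ≠ 0 :=
    mul_ne_zero (mul_ne_zero (pow_ne_zero _ hc) (mul_ne_zero hc hc)) (pow_ne_zero _ hc)
  have hXz : ∀ i : Fin d → Fin n,
      X i = ((X iS * X (Function.update iS z1 (iS z0))
          * ∏ t ∈ Finset.univ.filter (fun t : Fin d => 2 ≤ (t : ℕ)),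
              X (Function.update iS t (iS z0)))
        / (X iS ^ (d-1) * (X iS * X iS) * X iS ^ (d-2)))
        * ∏ t, X (Function.update iS z0 (i t)) := by
    intro i
    rw [div_mul_eq_mul_div, eq_div_iff hCne]
    linear_combination hfinal i
  -- normalization
  have hzS : X (Function.update iS z0 (iS z0)) = X iS := by rw [Function.update_eq_self]
  have hSpos : 0 < ∑ j, X (Function.update iS z0 j) ^ 2 := by
    have h1 : X (Function.update iS z0 (iS z0)) ^ 2 ≤ ∑ j, X (Function.update iS z0 j) ^ 2 :=
      Finset.single_le_sum (f := fun j => X (Function.update iS z0 j) ^ 2)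
        (fun j _ => sq_nonneg _) (Finset.mem_univ (iS z0))
    have h2 : 0 < X (Function.update iS z0 (iS z0)) ^ 2 := by
      rw [hzS]
      positivity
    linarith
  set S : ℝ := ∑ j, X (Function.update iS z0 j) ^ 2 with hSdef
  have hNpos : 0 < Real.sqrt S := Real.sqrt_pos.mpr hSpos
  have hN2 : Real.sqrt S ^ 2 = S := Real.sq_sqrt hSpos.le
  refine ⟨((X iS * X (Function.update iS z1 (iS z0))
      * ∏ t ∈ Finset.univ.filter (fun t : Fin d => 2 ≤ (t : ℕ)),
          X (Function.update iS t (iS z0)))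
    / (X iS ^ (d-1) * (X iS * X iS) * X iS ^ (d-2))) * Real.sqrt S ^ d,
    fun j => X (Function.update iS z0 j) / Real.sqrt S, ?_, ?_⟩
  · simp only [div_pow]
    rw [← Finset.sum_div, hN2, ← hSdef]
    exact div_self hSpos.ne'
  · funext i
    rw [hXz i, Finset.prod_div_distrib, Finset.prod_const, Finset.card_univ, Fintype.card_fin]
    have hNd : Real.sqrt S ^ d ≠ 0 := pow_ne_zero d hNpos.ne'
    field_simp

/-- equivalence between symmetric rank-1 tensors and rank-1 matricizations:
a symmetric tensor whose matricization has rank one is `λ x^{∘d}` for a unit `x`;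
conversely a nonzero symmetric outer product of `d` vectors has rank-one matricization;
hence the two sets coincide. -/
theorem stmt5 {n d : ℕ} (hd : 2 ≤ d) :
    (∀ X : (Fin d → Fin n) → ℝ, IsSymT X → (matT X).rank = 1 →
      ∃ (lam : ℝ) (x : Fin n → ℝ), (∑ j, x j ^ 2 = 1) ∧
        X = fun i => lam * ∏ j, x (i j))
    ∧ (∀ X : (Fin d → Fin n) → ℝ, IsSymT X → X ≠ 0 →
        (∃ v : Fin d → (Fin n → ℝ), X = fun i => ∏ j, v j (i j)) → (matT X).rank = 1)
    ∧ {X : (Fin d → Fin n) → ℝ | IsSymT X ∧ X ≠ 0 ∧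
          ∃ v : Fin d → (Fin n → ℝ), X = fun i => ∏ j, v j (i j)}
        = {X : (Fin d → Fin n) → ℝ | IsSymT X ∧ (matT X).rank = 1} := by
  refine ⟨fun X hX hr => part1 hd X hX hr, fun X hX hne hv => ?_, ?_⟩
  · obtain ⟨v, hv⟩ := hv
    exact part2 hd X hne v hv
  · ext X0
    simp only [Set.mem_setOf_eq]
    constructor
    · rintro ⟨hX, hne, v, hv⟩
      exact ⟨hX, part2 hd X0 hne v hv⟩
    · rintro ⟨hX, hr⟩
      have hne : X0 ≠ 0 := by
        intro h0
        rw [h0] at hr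
        have hz : matT (0 : (Fin d → Fin n) → ℝ) = 0 := rfl
        rw [hz] at hr
        simp at hr
      obtain ⟨lam, x, _, hxe⟩ := part1 hd X0 hX hr
      refine ⟨hX, hne, fun t => if t = (⟨0, by omega⟩ : Fin d) then lam • x else x, ?_⟩
      rw [hxe]
      funext i
      have h1 : ∀ j : Fin d, (if j = (⟨0, by omega⟩ : Fin d) then lam • x else x) (i j)
          = (if j = (⟨0, by omega⟩ : Fin d) then lam else 1) * x (i j) := by
        intro j
        by_cases hj : j = (⟨0, by omega⟩ : Fin d)
        · rw [if_pos hj, if_pos hj]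
          simp
        · rw [if_neg hj, if_neg hj]
          simp
      have h2 : (∏ j, (if j = (⟨0, by omega⟩ : Fin d) then lam • x else x) (i j))
          = lam * ∏ j, x (i j) := by
        calc ∏ j, (if j = (⟨0, by omega⟩ : Fin d) then lam • x else x) (i j)
            = ∏ j, ((if j = (⟨0, by omega⟩ : Fin d) then lam else 1) * x (i j)) :=
              Finset.prod_congr rfl fun j _ => h1 j
          _ = (∏ j, (if j = (⟨0, by omega⟩ : Fin d) then lam else 1)) * ∏ j, x (i j) :=
              Finset.prod_mul_distrib
          _ = lam * ∏ j, x (i j) := by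
              rw [Finset.prod_ite_eq' Finset.univ (⟨0, by omega⟩ : Fin d) (fun _ => lam)]
              simp
      exact h2.symm

end SpherePoly
end

section
/- Let d be even, A ∈ S^{n^d} symmetric, τ > 0, and suppose X*, Y*, Λ* satisfy the perturbed KKT system: X* minimizes ⟨−Λ* − τY*, X⟩ over the set C of symmetric rank-one 'matrix-positive' tensors with trace-one matricization, Sym(Λ*) = A, and X* = Y*. Writing X* = x^{∘d} with ‖x‖ = 1, the vector x is an eigenvector of A: A x^{∘(d−1)} = σ x for some real σ, with σ = ⟨A, X*⟩. -/
open scoped BigOperators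
open Matrix

namespace SpherePoly

noncomputable def tinner {n d : ℕ} (A B : (Fin d → Fin n) → ℝ) : ℝ :=
  ∑ i : Fin d → Fin n, A i * B i

noncomputable def symT {n d : ℕ} (A : (Fin d → Fin n) → ℝ) : (Fin d → Fin n) → ℝ :=
  fun i => (∑ π : Equiv.Perm (Fin d), A (i ∘ π)) / (Nat.factorial d : ℝ)

/-- Balanced matricization of an even-order (`d = 2m`) tensor. -/
def mat2 {n m : ℕ} (X : (Fin (2 * m) → Fin n) → ℝ) :
    Matrix (Fin m → Fin n) (Fin m → Fin n) ℝ :=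
  fun a b => X fun i => Sum.elim a b (finSumFinEquiv.symm (Fin.cast (by omega) i))

/-- The set `C` of tensors whose matricization is `z zᵀ` for a unit vector `z`
(symmetric rank-one PSD with trace one). -/
def CSet (n m : ℕ) : Set ((Fin (2 * m) → Fin n) → ℝ) :=
  {X | ∃ z : (Fin m → Fin n) → ℝ, (∑ a, z a ^ 2 = 1) ∧ ∀ a b, mat2 X a b = z a * z b}

/-- The contraction `(A x^{∘(d−1)})_j = Σ_{i, i 0 = j} A_i ∏_{k ≠ 0} x_{i k}`. -/
noncomputable def contract {n m : ℕ} (hm : 0 < m) (A : (Fin (2 * m) → Fin n) → ℝ)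
    (x : Fin n → ℝ) (j : Fin n) : ℝ :=
  ∑ i : Fin (2 * m) → Fin n,
    if i ⟨0, by omega⟩ = j then
      A i * ∏ k ∈ Finset.univ.erase (⟨0, by omega⟩ : Fin (2 * m)), x (i k)
    else 0


/-- sum over pi type factorizes -/
lemma sum_pi_prod {n N : ℕ} (G : Fin N → Fin n → ℝ) :
    ∑ i : Fin N → Fin n, ∏ l, G l (i l) = ∏ l, ∑ j, G l j := by
  rw [Finset.prod_univ_sum, Fintype.piFinset_univ]

lemma prod_erase_equiv {α β : Type*} [Fintype α] [Fintype β] [DecidableEq α] [DecidableEq β]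
    (e : α ≃ β) (f : β → ℝ) (k : α) :
    ∏ l ∈ Finset.univ.erase k, f (e l) = ∏ p ∈ Finset.univ.erase (e k), f p := by
  have h := Finset.prod_map (Finset.univ.erase k) e.toEmbedding f
  simp only [Equiv.coe_toEmbedding] at h
  rw [← h, Finset.map_erase, Finset.map_univ_equiv]
  simp

lemma prod_erase_inl {α β : Type*} [Fintype α] [Fintype β] [DecidableEq α] [DecidableEq β]
    (f : α ⊕ β → ℝ) (k : α) :
    ∏ p ∈ Finset.univ.erase (Sum.inl k), f p
      = (∏ l ∈ Finset.univ.erase k, f (Sum.inl l)) * ∏ l, f (Sum.inr l) := by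
  have h : (Finset.univ.erase (Sum.inl k) : Finset (α ⊕ β))
      = (Finset.univ.erase k).disjSum Finset.univ := by
    ext p
    cases p <;> simp [Finset.mem_erase]
  rw [h, Finset.prod_disjSum]

lemma prod_erase_inr {α β : Type*} [Fintype α] [Fintype β] [DecidableEq α] [DecidableEq β]
    (f : α ⊕ β → ℝ) (k : β) :
    ∏ p ∈ Finset.univ.erase (Sum.inr k), f p
      = (∏ l, f (Sum.inl l)) * ∏ l ∈ Finset.univ.erase k, f (Sum.inr l) := by
  have h : (Finset.univ.erase (Sum.inr k) : Finset (α ⊕ β))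
      = Finset.univ.disjSum (Finset.univ.erase k) := by
    ext p
    cases p <;> simp [Finset.mem_erase]
  rw [h, Finset.prod_disjSum]

lemma slot_zero {n N : ℕ} {x v : Fin n → ℝ}
    (hvx : ∑ j, v j * x j = 0) (k : Fin N) :
    ∑ i : Fin N → Fin n,
      (v (i k) * ∏ l ∈ Finset.univ.erase k, x (i l)) * ∏ l, x (i l) = 0 := by
  have key : ∀ i : Fin N → Fin n,
      (v (i k) * ∏ l ∈ Finset.univ.erase k, x (i l)) * ∏ l, x (i l)
        = ∏ l, (if l = k then v (i l) * x (i l) else x (i l) ^ 2) := by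
    intro i
    have h1 : (∏ l, x (i l)) = x (i k) * ∏ l ∈ Finset.univ.erase k, x (i l) :=
      (Finset.mul_prod_erase _ _ (Finset.mem_univ k)).symm
    have h2 : (∏ l, (if l = k then v (i l) * x (i l) else x (i l) ^ 2))
        = (v (i k) * x (i k)) * ∏ l ∈ Finset.univ.erase k, x (i l) ^ 2 := by
      rw [← Finset.mul_prod_erase Finset.univ _ (Finset.mem_univ k)]
      simp only [if_pos rfl]
      exact congrArg _ (Finset.prod_congr rfl fun l hl => if_neg (Finset.mem_erase.1 hl).1)
    rw [h1, h2, Finset.prod_pow]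
    ring
  have h3 := sum_pi_prod (fun l (j : Fin n) => if l = k then v j * x j else x j ^ 2)
  have h4 : ∑ i : Fin N → Fin n,
      (v (i k) * ∏ l ∈ Finset.univ.erase k, x (i l)) * ∏ l, x (i l)
      = ∏ l, ∑ j, (if l = k then v j * x j else x j ^ 2) :=
    (Finset.sum_congr rfl fun i _ => key i).trans h3
  rw [h4, ← Finset.mul_prod_erase Finset.univ _ (Finset.mem_univ k)]
  simp only [eq_self_iff_true, if_true]
  rw [hvx, zero_mul]

lemma sum_reindex_perm {n d : ℕ} (F : (Fin d → Fin n) → ℝ) (π : Equiv.Perm (Fin d)) :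
    ∑ i : Fin d → Fin n, F (i ∘ π) = ∑ i : Fin d → Fin n, F i :=
  Fintype.sum_equiv (Equiv.arrowCongr π.symm (Equiv.refl (Fin n))) _ _ (fun i => by
    congr 1)

lemma symT_eq_self' {n d : ℕ} {T : (Fin d → Fin n) → ℝ} (hT : IsSymT T) (i : Fin d → Fin n) :
    (∑ π : Equiv.Perm (Fin d), T (i ∘ π)) / (Nat.factorial d : ℝ) = T i := by
  rw [Finset.sum_congr rfl fun π _ => hT π i, Finset.sum_const, Finset.card_univ,
    Fintype.card_perm, Fintype.card_fin, nsmul_eq_mul]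
  exact mul_div_cancel_left₀ _ (by exact_mod_cast (Nat.factorial_ne_zero d))


lemma symT_eq_self {n d : ℕ} {T : (Fin d → Fin n) → ℝ} (hT : IsSymT T) : symT T = T :=
  funext fun i => symT_eq_self' hT i

def eS (m : ℕ) : Fin (2 * m) ≃ Fin m ⊕ Fin m :=
  (finCongr (by omega)).trans finSumFinEquiv.symm

def sp1 {n m : ℕ} (i : Fin (2 * m) → Fin n) : Fin m → Fin n :=
  fun k => i ((eS m).symm (Sum.inl k))

def sp2 {n m : ℕ} (i : Fin (2 * m) → Fin n) : Fin m → Fin n :=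
  fun k => i ((eS m).symm (Sum.inr k))

lemma mat2_apply {n m : ℕ} (X : (Fin (2 * m) → Fin n) → ℝ) (a b : Fin m → Fin n) :
    mat2 X a b = X (fun i => Sum.elim a b (eS m i)) := rfl

lemma sp1_elim {n m : ℕ} (a b : Fin m → Fin n) :
    sp1 (fun i => Sum.elim a b (eS m i)) = a := by
  funext k
  simp [sp1]

lemma sp2_elim {n m : ℕ} (a b : Fin m → Fin n) :
    sp2 (fun i => Sum.elim a b (eS m i)) = b := by
  funext k
  simp [sp2]

lemma Xz_mem {n m : ℕ} (z : (Fin m → Fin n) → ℝ) (hz : ∑ a, z a ^ 2 = 1) :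
    (fun i => z (sp1 i) * z (sp2 i)) ∈ CSet n m := by
  refine ⟨z, hz, fun a b => ?_⟩
  rw [mat2_apply]
  simp only [sp1_elim, sp2_elim]

lemma prod_split {n m : ℕ} (x : Fin n → ℝ) (i : Fin (2 * m) → Fin n) :
    ∏ k, x (i k) = (∏ k, x (sp1 i k)) * ∏ k, x (sp2 i k) :=
  calc ∏ k, x (i k)
      = ∏ p : Fin m ⊕ Fin m, (fun k => x (i k)) ((eS m).symm p) :=
        (Equiv.prod_comp (eS m).symm _).symm
    _ = (∏ k, x (i ((eS m).symm (Sum.inl k)))) * ∏ k, x (i ((eS m).symm (Sum.inr k))) :=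
        Fintype.prod_sum_type _
    _ = (∏ k, x (sp1 i k)) * ∏ k, x (sp2 i k) := rfl

lemma T_split {n m : ℕ} (x v : Fin n → ℝ) (i : Fin (2 * m) → Fin n) :
    ∑ k, v (i k) * ∏ l ∈ Finset.univ.erase k, x (i l)
      = (∑ k, v (sp1 i k) * ∏ l ∈ Finset.univ.erase k, x (sp1 i l)) * (∏ k, x (sp2 i k))
      + (∏ k, x (sp1 i k)) *
          ∑ k, v (sp2 i k) * ∏ l ∈ Finset.univ.erase k, x (sp2 i l) := by
  have step1 : ∑ k, v (i k) * ∏ l ∈ Finset.univ.erase k, x (i l)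
      = ∑ p : Fin m ⊕ Fin m,
          (fun k => v (i k) * ∏ l ∈ Finset.univ.erase k, x (i l)) ((eS m).symm p) :=
    (Equiv.sum_comp (eS m).symm _).symm
  have step2 : ∑ p : Fin m ⊕ Fin m,
        (fun k => v (i k) * ∏ l ∈ Finset.univ.erase k, x (i l)) ((eS m).symm p)
      = (∑ k : Fin m, v (i ((eS m).symm (Sum.inl k))) *
            ∏ l ∈ Finset.univ.erase ((eS m).symm (Sum.inl k)), x (i l))
        + ∑ k : Fin m, v (i ((eS m).symm (Sum.inr k))) *
            ∏ l ∈ Finset.univ.erase ((eS m).symm (Sum.inr k)), x (i l) :=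
    Fintype.sum_sum_type _
  rw [step1, step2, Finset.sum_mul, Finset.mul_sum]
  congr 1
  · apply Finset.sum_congr rfl
    intro k _
    have h1 : ∏ l ∈ Finset.univ.erase ((eS m).symm (Sum.inl k)), x (i l)
        = ∏ p ∈ Finset.univ.erase (Sum.inl k), x (i ((eS m).symm p)) :=
      (prod_erase_equiv (eS m).symm (fun l => x (i l)) (Sum.inl k)).symm
    rw [h1, prod_erase_inl (fun p => x (i ((eS m).symm p))) k]
    show v (sp1 i k) * ((∏ l ∈ Finset.univ.erase k, x (sp1 i l)) * ∏ l, x (sp2 i l)) = _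
    ring
  · apply Finset.sum_congr rfl
    intro k _
    have h1 : ∏ l ∈ Finset.univ.erase ((eS m).symm (Sum.inr k)), x (i l)
        = ∏ p ∈ Finset.univ.erase (Sum.inr k), x (i ((eS m).symm p)) :=
      (prod_erase_equiv (eS m).symm (fun l => x (i l)) (Sum.inr k)).symm
    rw [h1, prod_erase_inr (fun p => x (i ((eS m).symm p))) k]
    show v (sp2 i k) * ((∏ l, x (sp1 i l)) * ∏ l ∈ Finset.univ.erase k, x (sp2 i l)) = _
    ring

lemma T_isSym {n N : ℕ} (x v : Fin n → ℝ) :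
    IsSymT (fun i : Fin N → Fin n =>
      ∑ k, v (i k) * ∏ l ∈ Finset.univ.erase k, x (i l)) := by
  intro π i
  simp only [Function.comp_apply]
  calc ∑ k, v (i (π k)) * ∏ l ∈ Finset.univ.erase k, x (i (π l))
      = ∑ k, (fun k' => v (i k') * ∏ l ∈ Finset.univ.erase k', x (i l)) (π k) := by
        apply Finset.sum_congr rfl
        intro k _
        exact congrArg (fun t => v (i (π k)) * t) (prod_erase_equiv π (fun l => x (i l)) k)
    _ = _ := Equiv.sum_comp π
          (fun k' => v (i k') * ∏ l ∈ Finset.univ.erase k', x (i l))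

lemma contract_slot {n N : ℕ} {A : (Fin N → Fin n) → ℝ} (hA : IsSymT A) (x v : Fin n → ℝ)
    (k k' : Fin N) :
    ∑ i : Fin N → Fin n, A i * (v (i k) * ∏ l ∈ Finset.univ.erase k, x (i l))
      = ∑ i : Fin N → Fin n, A i * (v (i k') * ∏ l ∈ Finset.univ.erase k', x (i l)) := by
  rw [← sum_reindex_perm
      (fun i => A i * (v (i k') * ∏ l ∈ Finset.univ.erase k', x (i l))) (Equiv.swap k k')]
  apply Finset.sum_congr rfl
  intro i _
  show A i * (v (i k) * ∏ l ∈ Finset.univ.erase k, x (i l))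
      = A (i ∘ Equiv.swap k k') *
          (v ((i ∘ Equiv.swap k k') k') *
            ∏ l ∈ Finset.univ.erase k', x ((i ∘ Equiv.swap k k') l))
  have hv' : v ((i ∘ Equiv.swap k k') k') = v (i k) := by
    simp [Equiv.swap_apply_right]
  have hp : (∏ l ∈ Finset.univ.erase k', x ((i ∘ Equiv.swap k k') l))
      = ∏ l ∈ Finset.univ.erase k, x (i l) := by
    have h := prod_erase_equiv (Equiv.swap k k') (fun l => x (i l)) k'
    rw [Equiv.swap_apply_right] at h
    exact h
  rw [hA (Equiv.swap k k') i, hv', hp]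

lemma sum_T_prod_zero {n N : ℕ} {x v : Fin n → ℝ}
    (hvx : ∑ j, v j * x j = 0) :
    ∑ i : Fin N → Fin n,
      (∑ k, v (i k) * ∏ l ∈ Finset.univ.erase k, x (i l)) * ∏ l, x (i l) = 0 := by
  have h : ∀ i : Fin N → Fin n,
      (∑ k, v (i k) * ∏ l ∈ Finset.univ.erase k, x (i l)) * ∏ l, x (i l)
        = ∑ k, (v (i k) * ∏ l ∈ Finset.univ.erase k, x (i l)) * ∏ l, x (i l) :=
    fun i => Finset.sum_mul _ _ _
  rw [Finset.sum_congr rfl fun i _ => h i, Finset.sum_comm]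
  exact Finset.sum_eq_zero fun k _ => slot_zero hvx k

lemma tinner_symT_comm {n d : ℕ} (L T : (Fin d → Fin n) → ℝ) :
    tinner (symT L) T = tinner L (symT T) := by
  simp only [tinner, symT]
  have h1 : ∀ i : Fin d → Fin n,
      (∑ π : Equiv.Perm (Fin d), L (i ∘ π)) / (Nat.factorial d : ℝ) * T i
        = (∑ π : Equiv.Perm (Fin d), L (i ∘ π) * T i) / (Nat.factorial d : ℝ) := by
    intro i
    rw [div_mul_eq_mul_div, Finset.sum_mul]
  have h2 : ∀ i : Fin d → Fin n,
      L i * ((∑ π : Equiv.Perm (Fin d), T (i ∘ π)) / (Nat.factorial d : ℝ))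
        = (∑ π : Equiv.Perm (Fin d), L i * T (i ∘ π)) / (Nat.factorial d : ℝ) := by
    intro i
    rw [mul_div_assoc', Finset.mul_sum]
  rw [Finset.sum_congr rfl fun i _ => h1 i, Finset.sum_congr rfl fun i _ => h2 i,
    ← Finset.sum_div, ← Finset.sum_div]
  congr 1
  rw [Finset.sum_comm, Finset.sum_comm (s := Finset.univ) (t := Finset.univ)
    (f := fun i (π : Equiv.Perm (Fin d)) => L i * T (i ∘ π))]
  have hinner : ∀ π : Equiv.Perm (Fin d),
      ∑ i : Fin d → Fin n, L (i ∘ π) * T i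
        = ∑ i : Fin d → Fin n, L i * T (i ∘ ⇑π.symm) := by
    intro π
    have h3 : ∀ i : Fin d → Fin n,
        L (i ∘ π) * T i = (fun j => L j * T (j ∘ ⇑π.symm)) (i ∘ π) := by
      intro i
      show L (i ∘ π) * T i = L (i ∘ π) * T ((i ∘ π) ∘ ⇑π.symm)
      have hfix : (i ∘ ⇑π) ∘ ⇑π.symm = i := by
        funext k
        simp
      rw [hfix]
    calc ∑ i : Fin d → Fin n, L (i ∘ π) * T i
        = ∑ i : Fin d → Fin n, (fun j => L j * T (j ∘ ⇑π.symm)) (i ∘ π) :=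
          Finset.sum_congr rfl fun i _ => h3 i
      _ = ∑ i : Fin d → Fin n, L i * T (i ∘ ⇑π.symm) :=
          sum_reindex_perm (fun j => L j * T (j ∘ ⇑π.symm)) π
  rw [Finset.sum_congr rfl fun π _ => hinner π]
  exact Fintype.sum_equiv (Equiv.inv (Equiv.Perm (Fin d))) _ _ fun π => rfl

lemma linear_le_quadratic {b c : ℝ} (h : ∀ t : ℝ, t * b ≤ t ^ 2 * c) : b = 0 := by
  have key : ∀ t : ℝ, 0 < t → |b| ≤ t * c := by
    intro t ht
    have h1 := h t
    have h2 := h (-t)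
    rw [abs_le']
    constructor
    · nlinarith
    · nlinarith
  by_contra hb
  have hb' : 0 < |b| := abs_pos.mpr hb
  rcases le_or_gt c 0 with hc | hc
  · have := key 1 one_pos
    nlinarith
  · have h3 := key (|b| / (2 * c)) (by positivity)
    have hcc : |b| / (2 * c) * c = |b| / 2 := by
      field_simp
    rw [hcc] at h3
    linarith


/-- if `{X*, Y*, Λ*}` satisfies the perturbed KKT system and
`X* = x^{∘d}` with `‖x‖ = 1`, then `x` is an eigenvector of `A` with eigenvalue
`σ = ⟨A, X*⟩`. -/
theorem stmt6 {n m : ℕ} (hm : 0 < m) (τ : ℝ) (hτ : 0 < τ)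
    (A Xs Ys Λs : (Fin (2 * m) → Fin n) → ℝ) (hA : IsSymT A)
    (hXsC : Xs ∈ CSet n m)
    (hmin : ∀ X ∈ CSet n m,
      tinner (fun i => -Λs i - τ * Ys i) Xs ≤ tinner (fun i => -Λs i - τ * Ys i) X)
    (hSym : symT Λs = A) (hXY : Xs = Ys)
    (x : Fin n → ℝ) (hx : ∑ j, x j ^ 2 = 1)
    (hXsx : Xs = fun i => ∏ k, x (i k)) :
    ∀ j, contract hm A x j = tinner A Xs * x j := by
  rw [← hXY] at hmin
  have hz0 : (0:ℕ) < 2 * m := by omega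
  -- σ identity
  have hσ : ∑ j', x j' * contract hm A x j' = tinner A Xs := by
    simp only [contract, tinner, Finset.mul_sum, mul_ite, mul_zero]
    rw [Finset.sum_comm]
    apply Finset.sum_congr rfl
    intro i _
    rw [Finset.sum_ite_eq]
    simp only [Finset.mem_univ, if_true]
    have hXsi : Xs i = ∏ k, x (i k) := by rw [hXsx]
    rw [hXsi,
      ← Finset.mul_prod_erase Finset.univ (fun k => x (i k))
        (Finset.mem_univ (⟨0, hz0⟩ : Fin (2 * m)))]
    ring
  -- key orthogonality property
  have key : ∀ v : Fin n → ℝ, (∑ j', v j' * x j' = 0) →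
      (∑ j', v j' * contract hm A x j') = 0 := by
    intro v hv
    set zs : (Fin m → Fin n) → ℝ := fun a => ∏ k, x (a k) with hzs
    set wv : (Fin m → Fin n) → ℝ :=
      fun a => ∑ k, v (a k) * ∏ l ∈ Finset.univ.erase k, x (a l) with hwv
    set B : (Fin (2 * m) → Fin n) → ℝ := fun i => Λs i + τ * Xs i with hB
    have hXsi : ∀ i, Xs i = zs (sp1 i) * zs (sp2 i) := by
      intro i
      rw [hXsx, hzs]
      exact prod_split x i
    have hzs1 : ∑ a, zs a ^ 2 = 1 := by
      have hkey : ∀ a : Fin m → Fin n, zs a ^ 2 = ∏ k, x (a k) ^ 2 := by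
        intro a
        rw [hzs, ← Finset.prod_pow]
      have h3 : (∑ a : Fin m → Fin n, ∏ k, x (a k) ^ 2) = ∏ _l : Fin m, ∑ j', x j' ^ 2 :=
        sum_pi_prod (fun _ j' => x j' ^ 2)
      rw [Finset.sum_congr rfl fun a _ => hkey a, h3]
      simp [hx]
    have hmin' : ∀ z : (Fin m → Fin n) → ℝ, (∑ a, z a ^ 2 = 1) →
        (∑ i, B i * (z (sp1 i) * z (sp2 i))) ≤ ∑ i, B i * Xs i := by
      intro z hz
      have h1 := hmin _ (Xz_mem z hz)
      have e1 : ∀ Y : (Fin (2 * m) → Fin n) → ℝ,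
          tinner (fun i => -Λs i - τ * Xs i) Y = -∑ i, B i * Y i := by
        intro Y
        rw [tinner, ← Finset.sum_neg_distrib]
        apply Finset.sum_congr rfl
        intro i _
        rw [hB]
        ring
      rw [e1, e1] at h1
      linarith
    have hwz : ∑ a, wv a * zs a = 0 := by
      simp only [hwv, hzs]
      exact sum_T_prod_zero hv
    set W := ∑ a, wv a ^ 2 with hW
    have hWnn : 0 ≤ W := Finset.sum_nonneg fun a _ => sq_nonneg _
    set lam := ∑ i, B i * Xs i with hlam
    set R := ∑ i, B i * (wv (sp1 i) * zs (sp2 i) + zs (sp1 i) * wv (sp2 i)) with hR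
    set Qw := ∑ i, B i * (wv (sp1 i) * wv (sp2 i)) with hQw
    have hineq : ∀ t : ℝ, t * R ≤ t ^ 2 * (lam * W - Qw) := by
      intro t
      have hc : (0:ℝ) < 1 + t ^ 2 * W := by nlinarith [sq_nonneg t]
      have hynorm : ∑ a, (zs a + t * wv a) ^ 2 = 1 + t ^ 2 * W := by
        have hterm : ∀ a, (zs a + t * wv a) ^ 2
            = zs a ^ 2 + (2 * t) * (wv a * zs a) + t ^ 2 * wv a ^ 2 := by
          intro a
          ring
        rw [Finset.sum_congr rfl fun a _ => hterm a, Finset.sum_add_distrib,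
          Finset.sum_add_distrib, ← Finset.mul_sum, ← Finset.mul_sum, hzs1, hwz, ← hW]
        ring
      have hs0 : 0 < Real.sqrt (1 + t ^ 2 * W) := Real.sqrt_pos.mpr hc
      have hs2 : Real.sqrt (1 + t ^ 2 * W) ^ 2 = 1 + t ^ 2 * W := Real.sq_sqrt hc.le
      have hznorm : ∑ a, ((zs a + t * wv a) / Real.sqrt (1 + t ^ 2 * W)) ^ 2 = 1 := by
        have h4 : ∀ a, ((zs a + t * wv a) / Real.sqrt (1 + t ^ 2 * W)) ^ 2
            = (zs a + t * wv a) ^ 2 / (1 + t ^ 2 * W) := by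
          intro a
          rw [div_pow, hs2]
        rw [Finset.sum_congr rfl fun a _ => h4 a, ← Finset.sum_div, hynorm,
          div_self hc.ne']
      have h2 := hmin' (fun a => (zs a + t * wv a) / Real.sqrt (1 + t ^ 2 * W)) hznorm
      have hqy : ∑ i, B i * ((zs (sp1 i) + t * wv (sp1 i)) / Real.sqrt (1 + t ^ 2 * W) *
            ((zs (sp2 i) + t * wv (sp2 i)) / Real.sqrt (1 + t ^ 2 * W)))
          = (∑ i, B i * ((zs (sp1 i) + t * wv (sp1 i)) * (zs (sp2 i) + t * wv (sp2 i))))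
              / (1 + t ^ 2 * W) := by
        rw [Finset.sum_div]
        apply Finset.sum_congr rfl
        intro i _
        rw [div_mul_div_comm, ← sq, hs2]
        ring
      rw [hqy] at h2
      have hqexp : ∑ i, B i * ((zs (sp1 i) + t * wv (sp1 i)) * (zs (sp2 i) + t * wv (sp2 i)))
          = lam + t * R + t ^ 2 * Qw := by
        have hterm : ∀ i, B i * ((zs (sp1 i) + t * wv (sp1 i)) * (zs (sp2 i) + t * wv (sp2 i)))
            = B i * Xs i
              + t * (B i * (wv (sp1 i) * zs (sp2 i) + zs (sp1 i) * wv (sp2 i)))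
              + t ^ 2 * (B i * (wv (sp1 i) * wv (sp2 i))) := by
          intro i
          rw [hXsi i]
          ring
        rw [Finset.sum_congr rfl fun i _ => hterm i, Finset.sum_add_distrib,
          Finset.sum_add_distrib, ← Finset.mul_sum, ← Finset.mul_sum, ← hlam, ← hR, ← hQw]
      rw [hqexp, div_le_iff₀ hc] at h2
      nlinarith [h2]
    have hR0 : R = 0 := linear_le_quadratic hineq
    -- rewrite R as inner product with the symmetric tensor T
    have hTR : R = ∑ i, B i *
        (∑ k, v (i k) * ∏ l ∈ Finset.univ.erase k, x (i l)) := by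
      rw [hR]
      simp only [hwv, hzs]
      apply Finset.sum_congr rfl
      intro i _
      exact congrArg (fun t => B i * t) (T_split x v i).symm
    have hXsT : ∑ i, Xs i * (∑ k, v (i k) * ∏ l ∈ Finset.univ.erase k, x (i l)) = 0 := by
      have hterm : ∀ i : Fin (2 * m) → Fin n,
          Xs i * (∑ k, v (i k) * ∏ l ∈ Finset.univ.erase k, x (i l))
            = (∑ k, v (i k) * ∏ l ∈ Finset.univ.erase k, x (i l)) * ∏ l, x (i l) := by
        intro i
        rw [hXsx]
        ring
      rw [Finset.sum_congr rfl fun i _ => hterm i]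
      exact sum_T_prod_zero hv
    have hAT : ∑ i, A i * (∑ k, v (i k) * ∏ l ∈ Finset.univ.erase k, x (i l))
        = ∑ i, Λs i * (∑ k, v (i k) * ∏ l ∈ Finset.univ.erase k, x (i l)) := by
      have h1 : tinner A (fun i => ∑ k, v (i k) * ∏ l ∈ Finset.univ.erase k, x (i l))
          = tinner Λs (fun i => ∑ k, v (i k) * ∏ l ∈ Finset.univ.erase k, x (i l)) := by
        rw [← hSym, tinner_symT_comm]
        congr 1
        exact symT_eq_self (T_isSym x v)
      simpa only [tinner] using h1
    have hsplitB : R = (∑ i, Λs i * (∑ k, v (i k) * ∏ l ∈ Finset.univ.erase k, x (i l)))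
        + τ * ∑ i, Xs i * (∑ k, v (i k) * ∏ l ∈ Finset.univ.erase k, x (i l)) := by
      rw [hTR, Finset.mul_sum, ← Finset.sum_add_distrib]
      apply Finset.sum_congr rfl
      intro i _
      rw [hB]
      ring
    have hcsum : ∑ j', v j' * contract hm A x j'
        = ∑ i : Fin (2 * m) → Fin n, A i * (v (i ⟨0, hz0⟩) *
            ∏ l ∈ Finset.univ.erase (⟨0, hz0⟩ : Fin (2 * m)), x (i l)) := by
      simp only [contract, Finset.mul_sum, mul_ite, mul_zero]
      rw [Finset.sum_comm]
      apply Finset.sum_congr rfl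
      intro i _
      rw [Finset.sum_ite_eq]
      simp only [Finset.mem_univ, if_true]
      ring
    have hAT2 : ∑ i, A i * (∑ k, v (i k) * ∏ l ∈ Finset.univ.erase k, x (i l))
        = (2 * m : ℕ) * ∑ j', v j' * contract hm A x j' := by
      have h1 : ∀ i : Fin (2 * m) → Fin n,
          A i * (∑ k, v (i k) * ∏ l ∈ Finset.univ.erase k, x (i l))
            = ∑ k, A i * (v (i k) * ∏ l ∈ Finset.univ.erase k, x (i l)) :=
        fun i => Finset.mul_sum _ _ _
      rw [Finset.sum_congr rfl fun i _ => h1 i, Finset.sum_comm]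
      have h2 : ∀ k : Fin (2 * m),
          ∑ i : Fin (2 * m) → Fin n, A i * (v (i k) * ∏ l ∈ Finset.univ.erase k, x (i l))
            = ∑ j', v j' * contract hm A x j' := by
        intro k
        rw [contract_slot hA x v k ⟨0, hz0⟩, hcsum]
      rw [Finset.sum_congr rfl fun k _ => h2 k, Finset.sum_const, Finset.card_univ,
        Fintype.card_fin, nsmul_eq_mul]
    have hfin : ((2 * m : ℕ) : ℝ) * (∑ j', v j' * contract hm A x j') = 0 := by
      rw [← hAT2, hAT]
      have := hsplitB
      rw [hR0, hXsT, mul_zero, add_zero] at this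
      exact this.symm
    have h2m : ((2 * m : ℕ) : ℝ) ≠ 0 := by
      have : (0:ℕ) < 2 * m := hz0
      exact_mod_cast Nat.pos_iff_ne_zero.mp this
    exact (mul_eq_zero.mp hfin).resolve_left h2m
  -- conclude
  intro j
  have hv : ∑ j', ((if j' = j then (1:ℝ) else 0) - x j * x j') * x j' = 0 := by
    have hterm : ∀ j', ((if j' = j then (1:ℝ) else 0) - x j * x j') * x j'
        = (if j' = j then x j' else 0) - x j * x j' ^ 2 := by
      intro j'
      by_cases h : j' = j <;> simp [h] <;> ring
    rw [Finset.sum_congr rfl fun j' _ => hterm j', Finset.sum_sub_distrib,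
      Finset.sum_ite_eq', ← Finset.mul_sum, hx]
    simp
  have h0 := key _ hv
  have hexp : ∑ j', ((if j' = j then (1:ℝ) else 0) - x j * x j') * contract hm A x j'
      = contract hm A x j - x j * ∑ j', x j' * contract hm A x j' := by
    have hterm : ∀ j', ((if j' = j then (1:ℝ) else 0) - x j * x j') * contract hm A x j'
        = (if j' = j then contract hm A x j' else 0) - x j * (x j' * contract hm A x j') := by
      intro j'
      by_cases h : j' = j <;> simp [h] <;> ring
    rw [Finset.sum_congr rfl fun j' _ => hterm j', Finset.sum_sub_distrib,
      Finset.sum_ite_eq', ← Finset.mul_sum]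
    simp
  rw [hexp, hσ] at h0
  linarith

end SpherePoly
end

section
/- Let d be even and suppose {X*, Y*, Λ*} satisfies the perturbed optimality system with parameter τ (X* minimizes ⟨−Λ* − τY*, X⟩ over C, Sym(Λ*) = A, X* = Y*, Mat(Λ*) symmetric). Let σ_1 ≥ ... ≥ σ_{N} (N = n^{d/2}) be the eigenvalues of −Mat(Λ*) and assume the smallest eigenvalue σ_N is simple. If 0 < τ < σ_{N−1} − σ_N, then ⟨−Λ*, X − X*⟩ ≥ 0 for all X ∈ C; i.e., X* minimizes ⟨−Λ*, ·⟩ over C and the triple satisfies the unperturbed KKT system. -/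
open scoped BigOperators
open Matrix

namespace SpherePoly

def idxEquiv (n m : ℕ) : (Fin (2 * m) → Fin n) ≃ ((Fin m → Fin n) × (Fin m → Fin n)) :=
  (Equiv.arrowCongr ((finCongr (by omega : 2 * m = m + m)).trans finSumFinEquiv.symm)
    (Equiv.refl (Fin n))).trans (Equiv.sumArrowEquivProdArrow _ _ _)

lemma mat2_symm_apply {n m : ℕ} (X : (Fin (2 * m) → Fin n) → ℝ)
    (a b : Fin m → Fin n) :
    mat2 X a b = X ((idxEquiv n m).symm (a, b)) := by
  unfold mat2 idxEquiv
  congr 1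

lemma apply_eq_mat2 {n m : ℕ} (X : (Fin (2 * m) → Fin n) → ℝ) (i : Fin (2 * m) → Fin n) :
    X i = mat2 X (idxEquiv n m i).1 (idxEquiv n m i).2 := by
  rw [mat2_symm_apply]
  congr 1
  simp

lemma tinner_eq {n m : ℕ} (A B : (Fin (2 * m) → Fin n) → ℝ) :
    tinner A B = ∑ a, ∑ b, mat2 A a b * mat2 B a b := by
  unfold tinner
  calc (∑ i, A i * B i)
      = ∑ p : (Fin m → Fin n) × (Fin m → Fin n), mat2 A p.1 p.2 * mat2 B p.1 p.2 :=
        Fintype.sum_equiv (idxEquiv n m) _ _ (fun i => by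
          rw [apply_eq_mat2 A i, apply_eq_mat2 B i])
    _ = _ := Fintype.sum_prod_type _

lemma tinner_CSet {n m : ℕ} (B X : (Fin (2 * m) → Fin n) → ℝ)
    (z : (Fin m → Fin n) → ℝ) (hz : ∀ a b, mat2 X a b = z a * z b) :
    tinner B X = z ⬝ᵥ (mat2 B *ᵥ z) := by
  rw [tinner_eq]
  unfold dotProduct Matrix.mulVec dotProduct
  simp only [hz, Finset.mul_sum]
  apply Finset.sum_congr rfl
  intro a _
  apply Finset.sum_congr rfl
  intro b _
  ring

lemma dot_self_nonneg' {N : Type*} [Fintype N] (w : N → ℝ) : 0 ≤ w ⬝ᵥ w :=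
  Finset.sum_nonneg fun a _ => mul_self_nonneg _

/-- suppose `{X*, Y*, Λ*}` satisfies the perturbed optimality system with
parameter `τ`, the smallest eigenvalue `σN` of `−Mat(Λ*)` (with unit eigenvector `zN`)
is simple, `σN1` bounds the Rayleigh quotient on the orthogonal complement of `zN`
(i.e. is the second smallest eigenvalue), and `0 < τ < σN1 − σN`.  Then
`⟨−Λ*, X − X*⟩ ≥ 0` for all `X ∈ C`, i.e. `X*` minimizes `⟨−Λ*, ·⟩` over `C`. -/
theorem stmt7 {n m : ℕ} (τ : ℝ)
    (A Xs Ys Λs : (Fin (2 * m) → Fin n) → ℝ) (hA : IsSymT A)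
    (hMatSymm : (mat2 Λs).IsSymm)
    (hXsC : Xs ∈ CSet n m)
    (hmin : ∀ X ∈ CSet n m,
      tinner (fun i => -Λs i - τ * Ys i) Xs ≤ tinner (fun i => -Λs i - τ * Ys i) X)
    (hSym : symT Λs = A) (hXY : Xs = Ys)
    (σN σN1 : ℝ) (zN : (Fin m → Fin n) → ℝ) (hzN : zN ⬝ᵥ zN = 1)
    (heig : (-mat2 Λs) *ᵥ zN = σN • zN)
    (hsecond : ∀ w : (Fin m → Fin n) → ℝ, w ⬝ᵥ zN = 0 →
      σN1 * (w ⬝ᵥ w) ≤ w ⬝ᵥ ((-mat2 Λs) *ᵥ w))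
    (hτ1 : 0 < τ) (hτ2 : τ < σN1 - σN) :
    ∀ X ∈ CSet n m, tinner (fun i => -Λs i) Xs ≤ tinner (fun i => -Λs i) X := by
  obtain ⟨zs, hzs1, hzs2⟩ := hXsC
  set M : Matrix (Fin m → Fin n) (Fin m → Fin n) ℝ := -mat2 Λs with hMdef
  have hM : Mᵀ = M := by
    rw [hMdef, Matrix.transpose_neg, hMatSymm.eq]
  -- dot product of unit vectors from sum-of-squares hypothesis
  have hdot : ∀ z : (Fin m → Fin n) → ℝ, (∑ a, z a ^ 2 = 1) → z ⬝ᵥ z = 1 := by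
    intro z hz
    simpa [dotProduct, sq] using hz
  -- key Rayleigh decomposition
  have key : ∀ z : (Fin m → Fin n) → ℝ, (∑ a, z a ^ 2 = 1) →
      σN + (1 - (z ⬝ᵥ zN) ^ 2) * (σN1 - σN) ≤ z ⬝ᵥ (M *ᵥ z) ∧ (z ⬝ᵥ zN) ^ 2 ≤ 1 := by
    intro z hz
    set c : ℝ := z ⬝ᵥ zN with hc
    set w : (Fin m → Fin n) → ℝ := z - c • zN with hw
    have hw0 : w ⬝ᵥ zN = 0 := by
      rw [hw, sub_dotProduct, smul_dotProduct, hzN]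
      simp [hc]
    have hww : w ⬝ᵥ w = 1 - c ^ 2 := by
      rw [hw]
      rw [sub_dotProduct, dotProduct_sub, dotProduct_sub,
        smul_dotProduct, smul_dotProduct, dotProduct_smul,
        dotProduct_smul, hzN, hdot z hz, dotProduct_comm zN z, ← hc]
      simp only [smul_eq_mul]
      ring
    have hzw : z = w + c • zN := by rw [hw]; abel
    have hcross : zN ⬝ᵥ (M *ᵥ w) = 0 := by
      rw [Matrix.dotProduct_mulVec, ← Matrix.mulVec_transpose, hM, heig,
        smul_dotProduct, dotProduct_comm, hw0, smul_zero]
    have hray : z ⬝ᵥ (M *ᵥ z) = c ^ 2 * σN + w ⬝ᵥ (M *ᵥ w) := by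
      conv_lhs => rw [hzw]
      rw [Matrix.mulVec_add, Matrix.mulVec_smul, heig, add_dotProduct,
        smul_dotProduct, dotProduct_add, dotProduct_add,
        dotProduct_smul, dotProduct_smul, dotProduct_smul,
        hcross]
      simp only [dotProduct_smul, hzN, hw0, smul_eq_mul, mul_zero, zero_add,
        mul_one, smul_dotProduct]
      ring
    have hs := hsecond w hw0
    rw [hww] at hs
    have hwwnn : (0:ℝ) ≤ 1 - c ^ 2 := hww ▸ dot_self_nonneg' w
    constructor
    · rw [hray]; nlinarith
    · linarith
  -- the tensor X_N built from z_N
  set XN : (Fin (2 * m) → Fin n) → ℝ :=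
    fun i => zN ((idxEquiv n m i).1) * zN ((idxEquiv n m i).2) with hXN
  have hXNmat : ∀ a b, mat2 XN a b = zN a * zN b := by
    intro a b
    rw [mat2_symm_apply]
    simp [hXN]
  have hXNC : XN ∈ CSet n m := ⟨zN, by simpa [dotProduct, sq] using hzN, hXNmat⟩
  -- rewrite perturbed objective
  have hB : ∀ (X : (Fin (2 * m) → Fin n) → ℝ) (z : (Fin m → Fin n) → ℝ),
      (∀ a b, mat2 X a b = z a * z b) →
      tinner (fun i => -Λs i - τ * Ys i) X = z ⬝ᵥ (M *ᵥ z) - τ * (z ⬝ᵥ zs) ^ 2 := by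
    intro X z hzX
    rw [tinner_CSet _ _ z hzX]
    have hmatB : mat2 (fun i => -Λs i - τ * Ys i) = M - τ • Matrix.of (fun a b => zs a * zs b) := by
      ext a b
      have h1 : mat2 (fun i => -Λs i - τ * Ys i) a b = -(mat2 Λs a b) - τ * (mat2 Ys a b) := rfl
      rw [h1, ← hXY, hzs2]
      simp [hMdef]
    rw [hmatB, Matrix.sub_mulVec, dotProduct_sub, Matrix.smul_mulVec,
      dotProduct_smul]
    congr 1
    have : (Matrix.of (fun a b => zs a * zs b)) *ᵥ z = (zs ⬝ᵥ z) • zs := by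
      ext a
      simp only [Matrix.mulVec, dotProduct, Matrix.of_apply, Pi.smul_apply,
        smul_eq_mul, Finset.mul_sum]
      rw [Finset.sum_mul]
      exact Finset.sum_congr rfl fun _ _ => by ring
    rw [this, dotProduct_smul, dotProduct_comm z zs]
    simp only [smul_eq_mul]
    ring
  -- unperturbed objective
  have hC : ∀ (X : (Fin (2 * m) → Fin n) → ℝ) (z : (Fin m → Fin n) → ℝ),
      (∀ a b, mat2 X a b = z a * z b) →
      tinner (fun i => -Λs i) X = z ⬝ᵥ (M *ᵥ z) := by
    intro X z hzX
    rw [tinner_CSet _ _ z hzX]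
    rfl
  -- apply hmin at XN
  have hmin1 := hmin XN hXNC
  rw [hB Xs zs hzs2, hB XN zN hXNmat] at hmin1
  have hzNN : zN ⬝ᵥ (M *ᵥ zN) = σN := by
    rw [heig, dotProduct_smul, hzN]
    simp
  have hself : zs ⬝ᵥ zs = 1 := hdot zs hzs1
  have hkey_s := key zs hzs1
  -- conclude zs ⬝ᵥ (M *ᵥ zs) ≤ σN
  have hXsMin : zs ⬝ᵥ (M *ᵥ zs) ≤ σN := by
    rw [hzNN, hself, dotProduct_comm zN zs] at hmin1
    obtain ⟨h1, h2⟩ := hkey_s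
    nlinarith [hmin1, h1, h2]
  intro X hX
  obtain ⟨z, hz1, hz2⟩ := hX
  rw [hC Xs zs hzs2, hC X z hz2]
  obtain ⟨h1, h2⟩ := key z hz1
  nlinarith


end SpherePoly
end

section
/- Let M be an N×N symmetric matrix with smallest eigenvalue σ_N simple and unit eigenvector z_N, and let τ satisfy 0 < τ < σ_{N−1} − σ_N, where σ_{N−1} is the second smallest eigenvalue. If a unit vector z* satisfies (M + τ z* z*ᵀ) z* = σ' z* where σ' is the smallest eigenvalue of M + τ z* z*ᵀ, then z* is (up to sign) the eigenvector z_N corresponding to the smallest eigenvalue of M. -/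
open scoped BigOperators
open Matrix

namespace SpherePoly

/-- let `M` be symmetric with simple smallest eigenvalue `σN` (unit
eigenvector `zN`) and second smallest eigenvalue `σN1` (encoded by the Rayleigh bound on
the orthogonal complement of `zN`), and `0 < τ < σN1 − σN`.  If the unit vector `z*`
satisfies `(M + τ z* z*ᵀ) z* = σ' z*` with `σ'` the smallest eigenvalue of
`M + τ z* z*ᵀ`, then `z* = ±zN`. -/
theorem stmt8 {N : ℕ} (M : Matrix (Fin N) (Fin N) ℝ) (hM : M.IsSymm)
    (σN σN1 : ℝ) (zN : Fin N → ℝ) (hzN : zN ⬝ᵥ zN = 1)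
    (heig : M *ᵥ zN = σN • zN)
    (hsecond : ∀ w : Fin N → ℝ, w ⬝ᵥ zN = 0 → σN1 * (w ⬝ᵥ w) ≤ w ⬝ᵥ (M *ᵥ w))
    (τ : ℝ) (hτ1 : 0 < τ) (hτ2 : τ < σN1 - σN)
    (zs : Fin N → ℝ) (hzs : zs ⬝ᵥ zs = 1) (σ' : ℝ)
    (heig' : (M + τ • vecMulVec zs zs) *ᵥ zs = σ' • zs)
    (hmin' : ∀ w : Fin N → ℝ, σ' * (w ⬝ᵥ w) ≤ w ⬝ᵥ ((M + τ • vecMulVec zs zs) *ᵥ w)) :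
    zs = zN ∨ zs = -zN := by
  set c : ℝ := zs ⬝ᵥ zN with hc
  have hvv : ∀ v : Fin N → ℝ, (vecMulVec zs zs) *ᵥ v = (zs ⬝ᵥ v) • zs := by
    intro v
    ext i
    simp [vecMulVec_apply, mulVec, dotProduct, Finset.mul_sum, mul_comm, mul_left_comm,
      mul_assoc]
  -- M zs = (σ' - τ) • zs
  have hMzs : M *ᵥ zs = (σ' - τ) • zs := by
    have h := heig'
    rw [add_mulVec, smul_mulVec, hvv, hzs, one_smul] at h
    have : M *ᵥ zs = σ' • zs - τ • zs := by
      rw [← h]; abel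
    rw [this, ← sub_smul]
  -- σ' ≤ σN + τ * c^2
  have hσ' : σ' ≤ σN + τ * (c * c) := by
    have h := hmin' zN
    rw [add_mulVec, smul_mulVec, hvv, heig, hzN, mul_one] at h
    have hzNzs : zN ⬝ᵥ zs = c := by rw [hc, dotProduct_comm]
    simpa [dotProduct_add, dotProduct_smul, hzN, hzNzs, smul_smul, mul_comm, mul_assoc,
      mul_left_comm] using h
  set w : Fin N → ℝ := zs - c • zN with hw
  have hzNzs : zN ⬝ᵥ zs = c := by rw [hc, dotProduct_comm]
  have hwzN : w ⬝ᵥ zN = 0 := by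
    simp [hw, sub_dotProduct, smul_dotProduct, hzN, ← hc]
  have hww : w ⬝ᵥ w = 1 - c * c := by
    simp [hw, sub_dotProduct, dotProduct_sub, smul_dotProduct, dotProduct_smul, hzs, hzN,
      hzNzs, ← hc]
  have hwzs : w ⬝ᵥ zs = 1 - c * c := by
    simp [hw, sub_dotProduct, smul_dotProduct, hzs, hzNzs]
  have hMw : M *ᵥ w = (σ' - τ) • zs - (c * σN) • zN := by
    rw [hw, mulVec_sub, mulVec_smul, hMzs, heig, smul_smul]
  have hwMw : w ⬝ᵥ (M *ᵥ w) = (σ' - τ) * (1 - c * c) := by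
    rw [hMw, dotProduct_sub, dotProduct_smul, dotProduct_smul, hwzs, hwzN]
    simp [smul_eq_mul]
  have hkey := hsecond w hwzN
  rw [hww, hwMw] at hkey
  have hwwnn : 0 ≤ w ⬝ᵥ w := by
    apply Finset.sum_nonneg
    intro i _
    exact mul_self_nonneg _
  rw [hww] at hwwnn
  -- σ' - τ ≤ σN < σN1
  have hlt : σ' - τ < σN1 := by
    have hc2 : c * c ≤ 1 := by linarith
    nlinarith
  have hzero : 1 - c * c = 0 := by nlinarith
  have hwzero : w = 0 := by
    have : w ⬝ᵥ w = 0 := by rw [hww, hzero]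
    funext i
    have hnn : ∀ j ∈ Finset.univ, 0 ≤ w j * w j := fun j _ => mul_self_nonneg _
    have := (Finset.sum_eq_zero_iff_of_nonneg hnn).mp this i (Finset.mem_univ i)
    exact mul_self_eq_zero.mp this
  have hzseq : zs = c • zN := by
    have h := hwzero
    rw [hw] at h
    exact sub_eq_zero.mp h
  have hc1 : c = 1 ∨ c = -1 := mul_self_eq_one_iff.mp (by linarith)
  rcases hc1 with h | h
  · left; rw [hzseq, h, one_smul]
  · right; rw [hzseq, h, neg_one_smul]

end SpherePoly
end
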